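/- arXiv:1404.5940 — 6 statements merged into one kernel-verified Lean document; each statement's English description precedes it below -/
import Mathlib

section
/- For positive semidefinite matrices ρ and σ and any real α ≥ 1, Tr((ρ + σ)^α) ≥ Tr(ρ^α) + Tr(σ^α). -/
open Matrix BigOperators Kronecker ComplexOrder

noncomputable def funCalc {n : Type*} [Fintype n] [DecidableEq n]
    (f : ℝ → ℝ) (A : Matrix n n ℂ) : Matrix n n ℂ :=
  if h : A.IsHermitian then
    (h.eigenvectorUnitary : Matrix n n ℂ) *
      Matrix.diagonal (fun i => (f (h.eigenvalues i) : ℂ)) *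
      star (h.eigenvectorUnitary : Matrix n n ℂ)
  else 0

/-- Matrix power via functional calculus. -/
noncomputable def mpow {n : Type*} [Fintype n] [DecidableEq n]
    (A : Matrix n n ℂ) (α : ℝ) : Matrix n n ℂ :=
  funCalc (fun x => x ^ α) A

/-- A density matrix: positive semidefinite with unit trace. -/
def IsDensity {n : Type*} [Fintype n] [DecidableEq n] (ρ : Matrix n n ℂ) : Prop :=
  ρ.PosSemidef ∧ ρ.trace = 1

/-- Partial trace over the second factor. -/
noncomputable def ptraceB {a b : Type*} [Fintype a] [Fintype b]
    (M : Matrix (a × b) (a × b) ℂ) : Matrix a a ℂ :=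
  Matrix.of fun i j => ∑ k : b, M (i, k) (j, k)

/-- Partial trace over the first factor. -/
noncomputable def ptraceA {a b : Type*} [Fintype a] [Fintype b]
    (M : Matrix (a × b) (a × b) ℂ) : Matrix b b ℂ :=
  Matrix.of fun i j => ∑ k : a, M (k, i) (k, j)

/-- Fidelity F(ρ,σ) = Tr √(√σ ρ √σ). -/
noncomputable def fid {n : Type*} [Fintype n] [DecidableEq n]
    (ρ σ : Matrix n n ℂ) : ℝ :=
  ((mpow (mpow σ (1/2) * ρ * mpow σ (1/2)) (1/2)).trace).re

/-- Outer product |ψ⟩⟨ψ|. -/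
noncomputable def outer {n : Type*} (ψ : n → ℂ) : Matrix n n ℂ :=
  Matrix.of fun i j => ψ i * star (ψ j)

/-- Separability of a bipartite state. -/
def IsSepState {a b : Type*} [Fintype a] [Fintype b] [DecidableEq a] [DecidableEq b]
    (σ : Matrix (a × b) (a × b) ℂ) : Prop :=
  ∃ (k : ℕ) (q : Fin k → ℝ) (τ : Fin k → Matrix a a ℂ) (ω : Fin k → Matrix b b ℂ),
    (∀ i, 0 ≤ q i) ∧ (∑ i, q i = 1) ∧ (∀ i, IsDensity (τ i)) ∧ (∀ i, IsDensity (ω i)) ∧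
    σ = ∑ i, (q i : ℂ) • (τ i ⊗ₖ ω i)

/-- von Neumann entropy (base 2). -/
noncomputable def vnEntropy {n : Type*} [Fintype n] [DecidableEq n]
    (τ : Matrix n n ℂ) : ℝ :=
  -(τ * funCalc (Real.logb 2) τ).trace.re

/-- Rényi entropy of order β (base 2), with the von Neumann limit at β = 1. -/
noncomputable def renyiEntropy {n : Type*} [Fintype n] [DecidableEq n]
    (β : ℝ) (τ : Matrix n n ℂ) : ℝ :=
  if β = 1 then vnEntropy τ else (1 / (1 - β)) * Real.logb 2 ((mpow τ β).trace.re)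

/-- Rényi relative entropy of order α (base 2). -/
noncomputable def renyiRel {n : Type*} [Fintype n] [DecidableEq n]
    (α : ℝ) (ρ σ : Matrix n n ℂ) : ℝ :=
  (1 / (α - 1)) * Real.logb 2 ((mpow ρ α * mpow σ (1 - α)).trace.re)

section McCarthyHelpers

open Polynomial

variable {m : Type*} [Fintype m] [DecidableEq m]

private lemma my_eval_charpoly (M : Matrix m m ℂ) (x : ℂ) :
    M.charpoly.eval x = det (x • (1 : Matrix m m ℂ) - M) := by
  rw [Matrix.charpoly, ← coe_evalRingHom, RingHom.map_det]
  congr 1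
  ext i j
  by_cases h : i = j
  · subst h
    simp [charmatrix_apply_eq, Matrix.one_apply]
  · simp [charmatrix_apply_ne _ _ _ h, Matrix.one_apply_ne h, Matrix.sub_apply]

private lemma my_charpoly_mul_comm (A B : Matrix m m ℂ) :
    (A * B).charpoly = (B * A).charpoly := by
  apply Polynomial.funext
  intro x
  rw [my_eval_charpoly, my_eval_charpoly]
  rcases eq_or_ne x 0 with rfl | hx
  · simp only [zero_smul, zero_sub, det_neg]
    rw [Matrix.det_mul_comm]
  · have key : ∀ C D : Matrix m m ℂ,
        x • (1 : Matrix m m ℂ) - C * D = x • (1 - (x⁻¹ • C) * D) := by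
      intro C D
      rw [smul_sub, smul_mul_assoc, smul_smul, mul_inv_cancel₀ hx, one_smul]
    rw [key A B, key B A, Matrix.det_smul, Matrix.det_smul]
    congr 1
    rw [Matrix.det_one_sub_mul_comm]
    congr 1
    rw [Matrix.mul_smul, Matrix.smul_mul]

/-- The multiset of eigenvalues of a Hermitian matrix. -/
private noncomputable def espec {A : Matrix m m ℂ} (hA : A.IsHermitian) : Multiset ℝ :=
  Finset.univ.val.map hA.eigenvalues

private lemma charpoly_espec {A : Matrix m m ℂ} (hA : A.IsHermitian) :
    A.charpoly = ((espec hA).map (fun r : ℝ => X - C (Complex.ofReal r))).prod := by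
  have hV : (star (hA.eigenvectorUnitary : Matrix m m ℂ)) * (hA.eigenvectorUnitary : Matrix m m ℂ)
      = 1 := Matrix.mem_unitaryGroup_iff'.mp (hA.eigenvectorUnitary).2
  have h1 : A.charpoly
      = (Matrix.diagonal (RCLike.ofReal ∘ hA.eigenvalues) : Matrix m m ℂ).charpoly := by
    conv_lhs => rw [hA.spectral_theorem, Unitary.conjStarAlgAut_apply]
    rw [mul_assoc, my_charpoly_mul_comm, mul_assoc, hV, mul_one]
  rw [h1]
  apply Polynomial.funext
  intro x
  rw [my_eval_charpoly]
  have : x • (1 : Matrix m m ℂ) - Matrix.diagonal (RCLike.ofReal ∘ hA.eigenvalues)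
      = Matrix.diagonal (fun i => x - (hA.eigenvalues i : ℂ)) := by
    ext i j
    by_cases h : i = j
    · subst h; simp [Matrix.one_apply, Matrix.diagonal]
    · simp [Matrix.one_apply_ne h, Matrix.diagonal_apply_ne _ h, Matrix.sub_apply]
  rw [this, Matrix.det_diagonal, eval_multiset_prod, espec, Finset.prod_eq_multiset_prod]
  simp [Multiset.map_map, Function.comp]

private lemma roots_charpoly_espec {A : Matrix m m ℂ} (hA : A.IsHermitian) :
    A.charpoly.roots = (espec hA).map Complex.ofReal := by
  rw [charpoly_espec hA]
  have h2 := Polynomial.roots_multiset_prod_X_sub_C ((espec hA).map Complex.ofReal)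
  rw [← h2, Multiset.map_map]
  rfl

private lemma espec_eq_of_charpoly {l : Type*} [Fintype l] [DecidableEq l]
    {A : Matrix m m ℂ} {B : Matrix l l ℂ} (hA : A.IsHermitian) (hB : B.IsHermitian)
    (h : A.charpoly = B.charpoly) : espec hA = espec hB := by
  apply Multiset.map_injective (f := Complex.ofReal) Complex.ofReal_injective
  rw [← roots_charpoly_espec hA, ← roots_charpoly_espec hB, h]

private lemma espec_eq_add_of_charpoly {l l' : Type*} [Fintype l] [DecidableEq l]
    [Fintype l'] [DecidableEq l']
    {A : Matrix m m ℂ} {B : Matrix l l ℂ} {E : Matrix l' l' ℂ}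
    (hA : A.IsHermitian) (hB : B.IsHermitian) (hE : E.IsHermitian)
    (h : A.charpoly = B.charpoly * E.charpoly) : espec hA = espec hB + espec hE := by
  apply Multiset.map_injective (f := Complex.ofReal) Complex.ofReal_injective
  rw [Multiset.map_add, ← roots_charpoly_espec hA, ← roots_charpoly_espec hB,
    ← roots_charpoly_espec hE, h, Polynomial.roots_mul]
  exact mul_ne_zero B.charpoly_monic.ne_zero E.charpoly_monic.ne_zero

private lemma esum_espec (f : ℝ → ℝ) {A : Matrix m m ℂ} (hA : A.IsHermitian) :
    ∑ i, f (hA.eigenvalues i) = ((espec hA).map f).sum := by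
  rw [espec, Multiset.map_map]
  rfl

private lemma peierls {A : Matrix m m ℂ} (hA : A.PosSemidef) {f : ℝ → ℝ}
    (hf : ConvexOn ℝ (Set.Ici 0) f) (U : Matrix m m ℂ) (hU : U ∈ Matrix.unitaryGroup m ℂ) :
    ∑ i, f ((star U * A * U) i i).re ≤ ∑ i, f (hA.1.eigenvalues i) := by
  classical
  set W : Matrix m m ℂ := (hA.1.eigenvectorUnitary : Matrix m m ℂ) with hW
  set D : Matrix m m ℂ := Matrix.diagonal (RCLike.ofReal ∘ hA.1.eigenvalues) with hD
  set Q : Matrix m m ℂ := star W * U with hQdef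
  have hWU : W * star W = 1 := Matrix.mem_unitaryGroup_iff.mp (hA.1.eigenvectorUnitary).2
  have hWU' : star W * W = 1 := Matrix.mem_unitaryGroup_iff'.mp (hA.1.eigenvectorUnitary).2
  have hUU : U * star U = 1 := Matrix.mem_unitaryGroup_iff.mp hU
  have hUU' : star U * U = 1 := Matrix.mem_unitaryGroup_iff'.mp hU
  have hQ1 : star Q * Q = 1 := by
    rw [hQdef, StarMul.star_mul, star_star, mul_assoc, ← mul_assoc W, hWU, one_mul, hUU']
  have hQ2 : Q * star Q = 1 := by
    rw [hQdef, StarMul.star_mul, star_star, mul_assoc, ← mul_assoc U, hUU, one_mul, hWU']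
  set w : m → m → ℝ := fun i j => Complex.normSq (Q j i) with hw
  have hw0 : ∀ i j, 0 ≤ w i j := fun i j => Complex.normSq_nonneg _
  have hrow : ∀ i, ∑ j, w i j = 1 := by
    intro i
    have h := congr_arg (fun M : Matrix m m ℂ => (M i i).re) hQ1
    simpa [Matrix.mul_apply, Matrix.one_apply, Complex.re_sum, Matrix.star_apply,
      Complex.star_def, mul_comm, Complex.mul_conj, hw] using h
  have hcol : ∀ j, ∑ i, w i j = 1 := by
    intro j
    have h := congr_arg (fun M : Matrix m m ℂ => (M j j).re) hQ2
    simpa [Matrix.mul_apply, Matrix.one_apply, Complex.re_sum, Matrix.star_apply,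
      Complex.star_def, Complex.mul_conj, hw] using h
  have hdiag : ∀ i, ((star U * A * U) i i).re = ∑ j, w i j • hA.1.eigenvalues j := by
    intro i
    have hAU : star U * A * U = star Q * D * Q := by
      conv_lhs => rw [hA.1.spectral_theorem, Unitary.conjStarAlgAut_apply]
      simp only [hQdef, StarMul.star_mul, star_star, Matrix.mul_assoc]
      rfl
    rw [hAU, Matrix.mul_apply]
    have hterm : ∀ j, (star Q * D) i j * Q j i = ((w i j * hA.1.eigenvalues j : ℝ) : ℂ) := by
      intro j
      rw [hD, Matrix.mul_diagonal, Matrix.star_apply]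
      calc star (Q j i) * (RCLike.ofReal ∘ hA.1.eigenvalues) j * Q j i
          = (Q j i * star (Q j i)) * ((hA.1.eigenvalues j : ℝ) : ℂ) := by
            simp only [Function.comp_apply, RCLike.ofReal_alg]
            ring_nf
            simp [Complex.real_smul]
            ring
        _ = ((w i j * hA.1.eigenvalues j : ℝ) : ℂ) := by
            rw [show star (Q j i) = (starRingEnd ℂ) (Q j i) from rfl, Complex.mul_conj, hw]
            push_cast
            ring
    rw [Finset.sum_congr rfl (fun j _ => hterm j), Complex.re_sum]
    simp [smul_eq_mul]
  calc ∑ i, f ((star U * A * U) i i).re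
      = ∑ i, f (∑ j, w i j • hA.1.eigenvalues j) := by
        refine Finset.sum_congr rfl fun i _ => by rw [hdiag i]
    _ ≤ ∑ i, ∑ j, w i j • f (hA.1.eigenvalues j) := by
        refine Finset.sum_le_sum fun i _ => ?_
        exact hf.map_sum_le (fun j _ => hw0 i j) (hrow i)
          (fun j _ => hA.eigenvalues_nonneg j)
    _ = ∑ j, (∑ i, w i j) * f (hA.1.eigenvalues j) := by
        rw [Finset.sum_comm]
        simp [Finset.sum_mul, smul_eq_mul]
    _ = ∑ j, f (hA.1.eigenvalues j) := by
        refine Finset.sum_congr rfl fun j _ => by rw [hcol j, one_mul]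

private lemma diag_re_nonneg {M : Matrix m m ℂ} (hM : M.PosSemidef) (i : m) : 0 ≤ (M i i).re := by
  have h := hM.re_dotProduct_nonneg (Pi.single i 1)
  simpa [dotProduct, Matrix.mulVec, Pi.single_apply, Finset.sum_ite_eq] using h

private lemma esum_half_le {A B : Matrix m m ℂ} (hA : A.PosSemidef) (hB : B.PosSemidef)
    {f : ℝ → ℝ} (hf : ConvexOn ℝ (Set.Ici 0) f)
    (hE : ((2:ℂ)⁻¹ • (A + B)).PosSemidef) :
    ∑ i, f (hE.1.eigenvalues i)
      ≤ 2⁻¹ * (∑ i, f (hA.1.eigenvalues i)) + 2⁻¹ * (∑ i, f (hB.1.eigenvalues i)) := by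
  classical
  set V : Matrix m m ℂ := (hE.1.eigenvectorUnitary : Matrix m m ℂ) with hV
  have hVmem : V ∈ Matrix.unitaryGroup m ℂ := (hE.1.eigenvectorUnitary).2
  set a : m → ℝ := fun i => ((star V * A * V) i i).re with ha
  set b : m → ℝ := fun i => ((star V * B * V) i i).re with hb
  have ha0 : ∀ i, 0 ≤ a i := by
    intro i
    refine diag_re_nonneg ?_ i
    simpa [Matrix.star_eq_conjTranspose] using hA.conjTranspose_mul_mul_same Vᴴᴴ
  have hb0 : ∀ i, 0 ≤ b i := by
    intro i
    refine diag_re_nonneg ?_ i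
    simpa [Matrix.star_eq_conjTranspose] using hB.conjTranspose_mul_mul_same Vᴴᴴ
  have heig : ∀ i, hE.1.eigenvalues i = 2⁻¹ * a i + 2⁻¹ * b i := by
    intro i
    have hSD : star V * ((2:ℂ)⁻¹ • (A + B)) * V
        = Matrix.diagonal (RCLike.ofReal ∘ hE.1.eigenvalues) := by
      have hV1 : star V * V = 1 := Matrix.mem_unitaryGroup_iff'.mp hVmem
      conv_lhs => rw [hE.1.spectral_theorem, Unitary.conjStarAlgAut_apply]
      rw [← hV]
      simp only [Matrix.mul_assoc]
      rw [hV1, mul_one, ← mul_assoc, hV1, one_mul]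
    have h := congr_arg (fun M : Matrix m m ℂ => (M i i).re) hSD
    simp only [Matrix.diagonal_apply_eq, Function.comp_apply] at h
    have hexp : star V * ((2:ℂ)⁻¹ • (A + B)) * V
        = (2:ℂ)⁻¹ • (star V * A * V + star V * B * V) := by
      rw [Matrix.mul_smul, Matrix.smul_mul, Matrix.mul_add, Matrix.add_mul, smul_add]
    rw [hexp] at h
    have hre : (((2:ℂ)⁻¹ • (star V * A * V + star V * B * V)) i i).re
        = 2⁻¹ * a i + 2⁻¹ * b i := by
      simp [Matrix.smul_apply, Matrix.add_apply, ha, hb, Complex.add_re, mul_add]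
    rw [hre] at h
    simpa using h.symm
  calc ∑ i, f (hE.1.eigenvalues i)
      = ∑ i, f ((2:ℝ)⁻¹ • a i + (2:ℝ)⁻¹ • b i) := by
        refine Finset.sum_congr rfl fun i _ => by rw [heig i]; norm_num
    _ ≤ ∑ i, ((2:ℝ)⁻¹ • f (a i) + (2:ℝ)⁻¹ • f (b i)) := by
        refine Finset.sum_le_sum fun i _ => ?_
        exact hf.2 (ha0 i) (hb0 i) (by norm_num) (by norm_num) (by norm_num)
    _ = 2⁻¹ * (∑ i, f (a i)) + 2⁻¹ * (∑ i, f (b i)) := by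
        simp [smul_eq_mul, Finset.sum_add_distrib, ← Finset.mul_sum]
    _ ≤ 2⁻¹ * (∑ i, f (hA.1.eigenvalues i)) + 2⁻¹ * (∑ i, f (hB.1.eigenvalues i)) := by
        have pA := peierls hA hf V hVmem
        have pB := peierls hB hf V hVmem
        have h2 : (0:ℝ) ≤ 2⁻¹ := by norm_num
        exact add_le_add (mul_le_mul_of_nonneg_left pA h2) (mul_le_mul_of_nonneg_left pB h2)

private lemma posSemidef_half {X : Matrix m m ℂ} (hX : X.PosSemidef) :
    ((2:ℂ)⁻¹ • X).PosSemidef := by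
  constructor
  · have h : ((2:ℂ)⁻¹ • X)ᴴ = (2:ℂ)⁻¹ • Xᴴ := by
      rw [Matrix.conjTranspose_smul]
      norm_num
    rw [Matrix.IsHermitian, h, hX.1]
  · intro x
    have h := hX.2 x
    have h2 : (0:ℂ) ≤ (2:ℂ)⁻¹ := by
      rw [Complex.le_def]
      norm_num
    calc (0:ℂ) = 2⁻¹ * 0 := by ring
      _ ≤ 2⁻¹ * (x.sum fun i xi => x.sum fun j xj => star xi * X i j * xj) :=
          mul_le_mul_of_nonneg_left h h2
      _ = _ := by
          rw [Finsupp.mul_sum]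
          refine Finsupp.sum_congr fun i _ => ?_
          rw [Finsupp.mul_sum]
          refine Finsupp.sum_congr fun j _ => ?_
          simp only [Matrix.smul_apply, smul_eq_mul]
          ring

private lemma trace_funCalc_re (f : ℝ → ℝ) {A : Matrix m m ℂ} (hA : A.IsHermitian) :
    (funCalc f A).trace.re = ∑ i, f (hA.eigenvalues i) := by
  rw [funCalc, dif_pos hA, Matrix.trace_mul_cycle,
    Matrix.mem_unitaryGroup_iff'.mp (hA.eigenvectorUnitary).2, one_mul, Matrix.trace_diagonal]
  rw [Complex.re_sum]
  simp

open scoped MatrixOrder in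
private lemma exists_herm_sqrt {A : Matrix m m ℂ} (hA : A.PosSemidef) :
    ∃ R : Matrix m m ℂ, Rᴴ = R ∧ R * R = A :=
  ⟨CFC.sqrt A, (CFC.sqrt_nonneg A).posSemidef.1, CFC.sqrt_mul_sqrt_self A hA.nonneg⟩

end McCarthyHelpers


theorem trace_rpow_add_ge {n : Type*} [Fintype n] [DecidableEq n]
    (ρ σ : Matrix n n ℂ) (hρ : ρ.PosSemidef) (hσ : σ.PosSemidef)
    (α : ℝ) (hα : 1 ≤ α) :
    (mpow ρ α).trace.re + (mpow σ α).trace.re ≤ (mpow (ρ + σ) α).trace.re := by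
  classical
  set f : ℝ → ℝ := fun x => x ^ α with hfdef
  have hfconv : ConvexOn ℝ (Set.Ici 0) f := convexOn_rpow hα
  have hf0 : f 0 = 0 := Real.zero_rpow (by linarith)
  have hC : (ρ + σ).PosSemidef := hρ.add hσ
  have tρ : (mpow ρ α).trace.re = ∑ i, f (hρ.1.eigenvalues i) := trace_funCalc_re f hρ.1
  have tσ : (mpow σ α).trace.re = ∑ i, f (hσ.1.eigenvalues i) := trace_funCalc_re f hσ.1
  have tC : (mpow (ρ + σ) α).trace.re = ∑ i, f (hC.1.eigenvalues i) := trace_funCalc_re f hC.1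
  rw [tρ, tσ, tC]
  -- block matrix setup
  obtain ⟨R2, hR2H, hR2sq⟩ := exists_herm_sqrt hρ
  obtain ⟨S2, hS2H, hS2sq⟩ := exists_herm_sqrt hσ
  set M : Matrix (n ⊕ n) (n ⊕ n) ℂ := Matrix.fromBlocks R2 S2 0 0 with hMdef
  have hMT : Mᴴ = Matrix.fromBlocks R2 0 S2 0 := by
    rw [hMdef, Matrix.fromBlocks_conjTranspose, hR2H, hS2H]
    simp
  have hN : Mᴴ * M = Matrix.fromBlocks ρ (R2 * S2) (S2 * R2) σ := by
    rw [hMT, hMdef, Matrix.fromBlocks_multiply]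
    simp [hR2sq, hS2sq]
  have hMM : M * Mᴴ = Matrix.fromBlocks (ρ + σ) 0 0 0 := by
    rw [hMT, hMdef, Matrix.fromBlocks_multiply]
    simp [hR2sq, hS2sq]
  have hNpsd : (Mᴴ * M).PosSemidef := Matrix.posSemidef_conjTranspose_mul_self M
  have hMMpsd : (M * Mᴴ).PosSemidef := Matrix.posSemidef_self_mul_conjTranspose M
  set U : Matrix (n ⊕ n) (n ⊕ n) ℂ := Matrix.fromBlocks 1 0 0 (-1) with hUdef
  have hUT : Uᴴ = U := by
    rw [hUdef, Matrix.fromBlocks_conjTranspose]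
    simp
  have hUU : U * U = 1 := by
    rw [hUdef, Matrix.fromBlocks_multiply]
    simp [Matrix.fromBlocks_one]
  have hUNU : U * (Mᴴ * M) * U = Matrix.fromBlocks ρ (-(R2 * S2)) (-(S2 * R2)) σ := by
    rw [hN, hUdef, Matrix.fromBlocks_multiply, Matrix.fromBlocks_multiply]
    simp
  have hUNUpsd : (U * (Mᴴ * M) * U).PosSemidef := by
    have h := hNpsd.mul_mul_conjTranspose_same U
    rwa [hUT] at h
  have hEpsd : ((2:ℂ)⁻¹ • (Mᴴ * M + U * (Mᴴ * M) * U)).PosSemidef :=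
    posSemidef_half (hNpsd.add hUNUpsd)
  have hEeq : (2:ℂ)⁻¹ • (Mᴴ * M + U * (Mᴴ * M) * U) = Matrix.fromBlocks ρ 0 0 σ := by
    rw [hUNU, hN, Matrix.fromBlocks_add, Matrix.fromBlocks_smul]
    have h2 : ∀ (Y : Matrix n n ℂ), (2:ℂ)⁻¹ • (Y + Y) = Y := by
      intro Y
      rw [← two_smul ℂ, smul_smul]
      norm_num
    simp [h2]
  -- eigenvalue multiset identities
  have e1 : espec hEpsd.1 = espec hρ.1 + espec hσ.1 := by
    refine espec_eq_add_of_charpoly _ _ _ ?_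
    rw [hEeq, Matrix.charpoly_fromBlocks_zero₁₂]
  have e4 : espec hNpsd.1 = espec hMMpsd.1 :=
    espec_eq_of_charpoly _ _ (my_charpoly_mul_comm Mᴴ M)
  have e5 : espec hUNUpsd.1 = espec hNpsd.1 := by
    refine espec_eq_of_charpoly _ _ ?_
    rw [mul_assoc, my_charpoly_mul_comm, mul_assoc, hUU, mul_one]
  have e3 : espec hMMpsd.1 = espec hC.1 + espec (Matrix.isHermitian_zero (n := n) (α := ℂ)) := by
    refine espec_eq_add_of_charpoly _ _ _ ?_
    rw [hMM, Matrix.charpoly_fromBlocks_zero₁₂]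
  have h0eig : ∀ i, (Matrix.isHermitian_zero (n := n) (α := ℂ)).eigenvalues i = 0 := by
    intro i
    rw [Matrix.IsHermitian.eigenvalues_eq]
    simp
  -- assemble
  calc (∑ i, f (hρ.1.eigenvalues i)) + ∑ i, f (hσ.1.eigenvalues i)
      = ∑ i, f (hEpsd.1.eigenvalues i) := by
        rw [esum_espec f hρ.1, esum_espec f hσ.1, esum_espec f hEpsd.1, e1,
          Multiset.map_add, Multiset.sum_add]
    _ ≤ 2⁻¹ * (∑ i, f (hNpsd.1.eigenvalues i)) + 2⁻¹ * (∑ i, f (hUNUpsd.1.eigenvalues i)) :=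
        esum_half_le hNpsd hUNUpsd hfconv hEpsd
    _ = ∑ i, f (hNpsd.1.eigenvalues i) := by
        rw [esum_espec f hUNUpsd.1, e5, ← esum_espec f hNpsd.1]
        ring
    _ = ∑ i, f (hC.1.eigenvalues i) := by
        have hz : ((espec (Matrix.isHermitian_zero (n := n) (α := ℂ))).map f).sum = 0 := by
          rw [← esum_espec]
          exact Finset.sum_eq_zero fun i _ => by rw [h0eig i, hf0]
        rw [esum_espec f hNpsd.1, e4, e3, Multiset.map_add, Multiset.sum_add, hz, add_zero,
          esum_espec f hC.1]
end

section
/- Let ρ_1,…,ρ_m be density matrices, p a probability vector of length m, and α ∈ (1,2]. Then Tr((Σ_x p_x ρ_x)^α) ≥ Σ_x p_x^α Tr(ρ_x^α). -/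
open Matrix BigOperators Kronecker ComplexOrder

open MeasureTheory Set

section scalarIntegral
variable {β : ℝ}

lemma aux_meas (c : ℝ) : Measurable (fun u : ℝ => u ^ (β - 1) / (c + u)) := by
  fun_prop

lemma integrableOn_base (h0 : 0 < β) (h1 : β < 1) :
    IntegrableOn (fun u : ℝ => u ^ (β - 1) / (1 + u)) (Ioi 0) := by
  have hmeas : AEStronglyMeasurable (fun u : ℝ => u ^ (β - 1) / (1 + u))
      (volume.restrict (Ioi (0:ℝ))) := ((aux_meas 1).aestronglyMeasurable)
  have h01 : IntegrableOn (fun u : ℝ => u ^ (β - 1) / (1 + u)) (Ioc 0 1) := by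
    rw [integrableOn_Ioc_iff_integrableOn_Ioo]
    refine Integrable.mono' ((intervalIntegral.integrableOn_Ioo_rpow_iff (s := β - 1) zero_lt_one).2 (by linarith)) 
      ((aux_meas 1).aestronglyMeasurable) ?_
    filter_upwards [ae_restrict_mem measurableSet_Ioo] with u hu
    rw [Real.norm_eq_abs, abs_div, abs_of_nonneg (Real.rpow_nonneg hu.1.le _),
      abs_of_pos (by linarith [hu.1] : (0:ℝ) < 1 + u)]
    calc u ^ (β - 1) / (1 + u) ≤ u ^ (β - 1) / 1 := by
          apply div_le_div_of_nonneg_left (Real.rpow_nonneg hu.1.le _) one_pos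
          linarith [hu.1]
      _ = u ^ (β - 1) := by ring
  have h1i : IntegrableOn (fun u : ℝ => u ^ (β - 1) / (1 + u)) (Ioi 1) := by
    refine Integrable.mono' (integrableOn_Ioi_rpow_of_lt (by linarith : β - 2 < -1) one_pos)
      ((aux_meas 1).aestronglyMeasurable) ?_
    filter_upwards [ae_restrict_mem measurableSet_Ioi] with u hu
    have hu0 : (0:ℝ) < u := lt_trans one_pos hu
    rw [Real.norm_eq_abs, abs_div, abs_of_nonneg (Real.rpow_nonneg hu0.le _),
      abs_of_pos (by linarith : (0:ℝ) < 1 + u)]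
    calc u ^ (β - 1) / (1 + u) ≤ u ^ (β - 1) / u := by
          apply div_le_div_of_nonneg_left (Real.rpow_nonneg hu0.le _) hu0
          linarith
      _ = u ^ (β - 2) := by
          rw [div_eq_iff hu0.ne', ← Real.rpow_add_one hu0.ne']
          ring_nf
  have : Ioc (0:ℝ) 1 ∪ Ioi 1 = Ioi 0 := Ioc_union_Ioi_eq_Ioi zero_le_one
  rw [← this]
  exact h01.union h1i

lemma base_pos (h0 : 0 < β) (h1 : β < 1) :
    0 < ∫ u in Ioi (0:ℝ), u ^ (β - 1) / (1 + u) := by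
  rw [setIntegral_pos_iff_support_of_nonneg_ae]
  · have : Ioi (0:ℝ) ⊆ Function.support (fun u : ℝ => u ^ (β - 1) / (1 + u)) ∩ Ioi 0 := by
      intro u hu
      refine ⟨?_, hu⟩
      have : 0 < u ^ (β - 1) / (1 + u) :=
        div_pos (Real.rpow_pos_of_pos hu _) (by linarith [mem_Ioi.mp hu])
      exact Function.mem_support.2 this.ne'
    calc (0:ENNReal) < volume (Ioi (0:ℝ)) := by simp
      _ ≤ _ := measure_mono this
  · filter_upwards [ae_restrict_mem measurableSet_Ioi] with u hu
    exact div_nonneg (Real.rpow_nonneg (le_of_lt hu) _) (by linarith [mem_Ioi.mp hu])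
  · exact integrableOn_base h0 h1

lemma scalar_integrable (h0 : 0 < β) (h1 : β < 1) {d : ℝ} (hd : 0 ≤ d) :
    IntegrableOn (fun s : ℝ => s ^ (β - 1) * (d / (d + s))) (Ioi 0) := by
  rcases eq_or_lt_of_le hd with rfl | hd'
  · simp only [zero_div, zero_add, mul_zero]; exact integrableOn_zero (s := Ioi (0:ℝ)) (μ := volume)
  · rw [show (0:ℝ) = d * 0 by ring,
      ← integrableOn_Ioi_comp_mul_left_iff (fun s : ℝ => s ^ (β - 1) * (d / (d + s))) 0 hd']
    apply IntegrableOn.congr_fun (((integrableOn_base h0 h1).const_mul (d ^ (β - 1))))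
      _ measurableSet_Ioi
    intro x hx
    have hx0 : (0:ℝ) < x := hx
    simp only
    rw [Real.mul_rpow hd hx0.le]
    have h1 : d + d * x ≠ 0 := by positivity
    have h2 : (1:ℝ) + x ≠ 0 := by positivity
    field_simp

lemma scalar_integral (h0 : 0 < β) (h1 : β < 1) {d : ℝ} (hd : 0 ≤ d) :
    ∫ s in Ioi (0:ℝ), s ^ (β - 1) * (d / (d + s))
      = d ^ β * ∫ u in Ioi (0:ℝ), u ^ (β - 1) / (1 + u) := by
  rcases eq_or_lt_of_le hd with rfl | hd'
  · simp [Real.zero_rpow h0.ne']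
  · have key := integral_comp_mul_left_Ioi
      (fun s : ℝ => s ^ (β - 1) * (d / (d + s))) 0 hd'
    rw [mul_zero] at key
    have congr1 : ∫ x in Ioi (0:ℝ), (d * x) ^ (β - 1) * (d / (d + d * x))
        = ∫ x in Ioi (0:ℝ), d ^ (β - 1) * (x ^ (β - 1) / (1 + x)) := by
      apply setIntegral_congr_fun measurableSet_Ioi
      intro x hx
      have hx0 : (0:ℝ) < x := hx
      simp only
      rw [Real.mul_rpow hd hx0.le]
      have hA : d + d * x ≠ 0 := by positivity
      have hB : (1:ℝ) + x ≠ 0 := by positivity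
      field_simp
    rw [congr1, MeasureTheory.integral_const_mul] at key
    have hsolve : (∫ s in Ioi (0:ℝ), s ^ (β - 1) * (d / (d + s)))
        = d * (d ^ (β - 1) * ∫ u in Ioi (0:ℝ), u ^ (β - 1) / (1 + u)) := by
      rw [key, smul_eq_mul]
      rw [← mul_assoc, mul_inv_cancel₀ hd'.ne', one_mul]
    rw [hsolve, ← mul_assoc, ← Real.rpow_one_add' hd (by ring_nf; linarith : (1:ℝ) + (β-1) ≠ 0)]
    ring_nf

open Matrix BigOperators ComplexOrder MeasureTheory Set

variable {n : Type*} [Fintype n] [DecidableEq n]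

lemma psd_diag_nonneg {C : Matrix n n ℂ} (hC : C.PosSemidef) (i : n) :
    0 ≤ (C i i).re ∧ (C i i).im = 0 := by
  have h := hC.dotProduct_mulVec_nonneg (Pi.single i 1)
  have he : star (Pi.single i 1 : n → ℂ) ⬝ᵥ C *ᵥ Pi.single i 1 = C i i := by
    simp [Matrix.mulVec_single, dotProduct, Pi.single_apply]
  rw [he] at h
  obtain ⟨h1, h2⟩ := Complex.nonneg_iff.mp h
  exact ⟨h1, h2.symm⟩

lemma trace_unitary_conj_diag {V : Matrix n n ℂ} (g : n → ℝ) (C : Matrix n n ℂ) :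
    ((V * Matrix.diagonal (fun i => (g i : ℂ)) * star V) * C).trace
      = ∑ i, (g i : ℂ) * ((star V * C * V) i i) := by
  have h1 : (V * Matrix.diagonal (fun i => (g i : ℂ)) * star V) * C
      = V * (Matrix.diagonal (fun i => (g i : ℂ)) * (star V * C)) := by
    simp only [Matrix.mul_assoc]
  rw [h1, Matrix.trace_mul_comm]
  have h2 : (Matrix.diagonal (fun i => (g i : ℂ)) * (star V * C)) * V
      = Matrix.diagonal (fun i => (g i : ℂ)) * (star V * C * V) := by
    simp only [Matrix.mul_assoc]
  rw [h2]
  simp [Matrix.trace, Matrix.diag, Matrix.diagonal_mul]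

lemma unitary_conj_mul {V : Matrix n n ℂ} (hV : V ∈ Matrix.unitaryGroup n ℂ)
    (D E : Matrix n n ℂ) :
    (V * D * star V) * (V * E * star V) = V * (D * E) * star V := by
  have h : star V * V = 1 := Matrix.mem_unitaryGroup_iff'.mp hV
  calc (V * D * star V) * (V * E * star V)
      = V * D * (star V * V) * E * star V := by simp only [Matrix.mul_assoc]
    _ = V * (D * E) * star V := by rw [h]; simp only [Matrix.mul_one, Matrix.mul_assoc]

lemma trace_psd_mul_nonneg {M N : Matrix n n ℂ} (hM : M.PosSemidef) (hN : N.PosSemidef) :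
    0 ≤ ((M * N).trace).re := by
  obtain ⟨S, rfl⟩ : ∃ S : Matrix n n ℂ, N = Sᴴ * S := by
    open scoped MatrixOrder in exact CStarAlgebra.nonneg_iff_eq_star_mul_self.mp hN.nonneg
  rw [← Matrix.mul_assoc, Matrix.trace_mul_cycle]
  have hP : (S * M * Sᴴ).PosSemidef := hM.mul_mul_conjTranspose_same S
  rw [Matrix.trace, Complex.re_sum]
  exact Finset.sum_nonneg fun i _ => (psd_diag_nonneg hP i).1

lemma herm_dot {M : Matrix n n ℂ} (hM : M.IsHermitian) (x y : n → ℂ) :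
    star (M *ᵥ x) ⬝ᵥ y = star x ⬝ᵥ M *ᵥ y := by
  rw [Matrix.star_mulVec, hM.eq, ← Matrix.dotProduct_mulVec]

lemma inv_sub_inv_psd {X Y : Matrix n n ℂ} (hX : X.PosDef) (hY : Y.PosDef)
    (hXY : (Y - X).PosSemidef) : (X⁻¹ - Y⁻¹).PosSemidef := by
  have hXu : IsUnit X.det := (Matrix.isUnit_iff_isUnit_det X).mp hX.isUnit
  have hYu : IsUnit Y.det := (Matrix.isUnit_iff_isUnit_det Y).mp hY.isUnit
  have hXinv : X⁻¹.IsHermitian := hX.isHermitian.inv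
  have hYinv : Y⁻¹.IsHermitian := hY.isHermitian.inv
  refine Matrix.PosSemidef.of_dotProduct_mulVec_nonneg (hXinv.sub hYinv) fun v => ?_
  set a := X⁻¹ *ᵥ v with ha
  set w := Y⁻¹ *ᵥ v with hw
  have hva : X *ᵥ a = v := by
    rw [ha, Matrix.mulVec_mulVec, Matrix.mul_nonsing_inv X hXu, Matrix.one_mulVec]
  have hvw : Y *ᵥ w = v := by
    rw [hw, Matrix.mulVec_mulVec, Matrix.mul_nonsing_inv Y hYu, Matrix.one_mulVec]
  have key : star v ⬝ᵥ (X⁻¹ - Y⁻¹) *ᵥ v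
      = star (a - w) ⬝ᵥ X *ᵥ (a - w) + star w ⬝ᵥ (Y - X) *ᵥ w := by
    have e1 : (X⁻¹ - Y⁻¹) *ᵥ v = a - w := by rw [Matrix.sub_mulVec]
    rw [e1]
    have hq : star v ⬝ᵥ a = star a ⬝ᵥ X *ᵥ a := by
      conv_lhs => rw [← hva]
      rw [herm_dot hX.isHermitian]
    have hp5 : star a ⬝ᵥ X *ᵥ w = star v ⬝ᵥ w := by
      rw [← herm_dot hX.isHermitian, hva]
    have hp6 : star w ⬝ᵥ X *ᵥ a = star w ⬝ᵥ v := by rw [hva]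
    have hp7 : star w ⬝ᵥ Y *ᵥ w = star w ⬝ᵥ v := by rw [hvw]
    simp only [Matrix.mulVec_sub, Matrix.sub_mulVec, star_sub, sub_dotProduct,
      dotProduct_sub]
    rw [hq, hp5, hp6, hp7]
    ring
  rw [key]
  exact add_nonneg (hX.posSemidef.dotProduct_mulVec_nonneg _) (hXY.dotProduct_mulVec_nonneg _)

lemma smul_one_posDef {s : ℝ} (hs : 0 < s) : ((s:ℂ) • (1 : Matrix n n ℂ)).PosDef := by
  rw [Matrix.smul_one_eq_diagonal]
  exact Matrix.posDef_diagonal_iff.mpr fun i => by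
    exact_mod_cast Complex.zero_lt_real.mpr hs

lemma resolvent_trace_mono {M B C : Matrix n n ℂ} (hM : M.PosSemidef) (hB : B.PosSemidef)
    (hMB : (B - M).PosSemidef) (hC : C.PosSemidef) {s : ℝ} (hs : 0 < s) :
    ((M * (M + (s:ℂ) • 1)⁻¹ * C).trace).re ≤ ((B * (B + (s:ℂ) • 1)⁻¹ * C).trace).re := by
  have hs1 : ((s:ℂ) • (1 : Matrix n n ℂ)).PosDef := smul_one_posDef hs
  have hX : (M + (s:ℂ) • 1).PosDef := Matrix.PosDef.posSemidef_add hM hs1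
  have hY : (B + (s:ℂ) • 1).PosDef := Matrix.PosDef.posSemidef_add hB hs1
  have hXu : IsUnit (M + (s:ℂ) • 1).det := (Matrix.isUnit_iff_isUnit_det _).mp hX.isUnit
  have hYu : IsUnit (B + (s:ℂ) • 1).det := (Matrix.isUnit_iff_isUnit_det _).mp hY.isUnit
  have expand : ∀ (A : Matrix n n ℂ), IsUnit (A + (s:ℂ) • 1).det →
      A * (A + (s:ℂ) • 1)⁻¹ * C = C - (s:ℂ) • ((A + (s:ℂ) • 1)⁻¹ * C) := by
    intro A hAu
    have : A * (A + (s:ℂ) • 1)⁻¹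
        = ((A + (s:ℂ) • 1) - (s:ℂ) • 1) * (A + (s:ℂ) • 1)⁻¹ := by rw [add_sub_cancel_right]
    rw [this, Matrix.sub_mul, Matrix.mul_nonsing_inv _ hAu, Matrix.smul_mul,
      Matrix.one_mul, Matrix.sub_mul, Matrix.one_mul, Matrix.smul_mul]
  rw [expand M hXu, expand B hYu, Matrix.trace_sub, Matrix.trace_sub, Matrix.trace_smul,
    Matrix.trace_smul]
  have hpsd : ((M + (s:ℂ) • 1)⁻¹ - (B + (s:ℂ) • 1)⁻¹).PosSemidef :=
    inv_sub_inv_psd hX hY (by convert hMB using 1; abel)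
  have h0 : 0 ≤ ((((M + (s:ℂ) • 1)⁻¹ - (B + (s:ℂ) • 1)⁻¹) * C).trace).re :=
    trace_psd_mul_nonneg hpsd hC
  rw [Matrix.sub_mul, Matrix.trace_sub, Complex.sub_re] at h0
  have hre : ∀ z : ℂ, ((s:ℂ) • z).re = s * z.re := by
    intro z
    simp [smul_eq_mul, Complex.mul_re]
  rw [Complex.sub_re, Complex.sub_re, hre, hre]
  nlinarith [h0, hs]

section spectral
variable {A C : Matrix n n ℂ}

lemma conj_coeff_nonneg (hA : A.IsHermitian) (hC : C.PosSemidef) (i : n) :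
    0 ≤ ((star (hA.eigenvectorUnitary : Matrix n n ℂ) * C *
        (hA.eigenvectorUnitary : Matrix n n ℂ)) i i).re ∧
      ((star (hA.eigenvectorUnitary : Matrix n n ℂ) * C *
        (hA.eigenvectorUnitary : Matrix n n ℂ)) i i).im = 0 := by
  have := hC.conjTranspose_mul_mul_same (hA.eigenvectorUnitary : Matrix n n ℂ)
  rw [← Matrix.star_eq_conjTranspose] at this
  exact psd_diag_nonneg this i

lemma mpow_trace_formula (hA : A.IsHermitian) (β : ℝ) (C : Matrix n n ℂ) :
    (mpow A β * C).trace = ∑ i, ((hA.eigenvalues i ^ β : ℝ) : ℂ) *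
      ((star (hA.eigenvectorUnitary : Matrix n n ℂ) * C *
        (hA.eigenvectorUnitary : Matrix n n ℂ)) i i) := by
  rw [mpow, funCalc, dif_pos hA]
  exact trace_unitary_conj_diag _ C

lemma smul_spectral (hA : A.IsHermitian) (t : ℝ) :
    (t:ℂ) • A = (hA.eigenvectorUnitary : Matrix n n ℂ) *
      Matrix.diagonal (fun i => ((t * hA.eigenvalues i : ℝ) : ℂ)) *
      star (hA.eigenvectorUnitary : Matrix n n ℂ) := by
  conv_lhs => rw [hA.spectral_theorem, Unitary.conjStarAlgAut_apply]
  rw [← Matrix.smul_mul, ← Matrix.mul_smul, ← Matrix.diagonal_smul]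
  have hfun : (t:ℂ) • (RCLike.ofReal ∘ hA.eigenvalues : n → ℂ)
      = fun i => ((t * hA.eigenvalues i : ℝ) : ℂ) := by
    funext i
    simp [Function.comp]
  rw [hfun]

lemma add_smul_one_spectral (hA : A.IsHermitian) (t s : ℝ) :
    (t:ℂ) • A + (s:ℂ) • 1 = (hA.eigenvectorUnitary : Matrix n n ℂ) *
      Matrix.diagonal (fun i => ((t * hA.eigenvalues i + s : ℝ) : ℂ)) *
      star (hA.eigenvectorUnitary : Matrix n n ℂ) := by
  have hU : (hA.eigenvectorUnitary : Matrix n n ℂ) *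
      star (hA.eigenvectorUnitary : Matrix n n ℂ) = 1 :=
    Matrix.mem_unitaryGroup_iff.mp hA.eigenvectorUnitary.2
  have h1 : (s:ℂ) • (1 : Matrix n n ℂ) = (hA.eigenvectorUnitary : Matrix n n ℂ) *
      Matrix.diagonal (fun _ : n => (s : ℂ)) *
      star (hA.eigenvectorUnitary : Matrix n n ℂ) := by
    rw [← Matrix.smul_one_eq_diagonal, Matrix.mul_smul, Matrix.mul_one, Matrix.smul_mul, hU]
  rw [smul_spectral hA t, h1, ← Matrix.add_mul, ← Matrix.mul_add, Matrix.diagonal_add]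
  congr 2
  funext i
  push_cast
  ring

lemma resolvent_trace_formula (hA : A.PosSemidef) (C : Matrix n n ℂ) {t s : ℝ}
    (ht : 0 ≤ t) (hs : 0 < s) :
    (((t:ℂ) • A * ((t:ℂ) • A + (s:ℂ) • 1)⁻¹ * C).trace)
      = ∑ i, ((t * hA.1.eigenvalues i / (t * hA.1.eigenvalues i + s) : ℝ) : ℂ) *
        ((star (hA.1.eigenvectorUnitary : Matrix n n ℂ) * C *
          (hA.1.eigenvectorUnitary : Matrix n n ℂ)) i i) := by
  have hpos : ∀ i, 0 < t * hA.1.eigenvalues i + s := fun i =>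
    add_pos_of_nonneg_of_pos (mul_nonneg ht (hA.eigenvalues_nonneg i)) hs
  have hU : (hA.1.eigenvectorUnitary : Matrix n n ℂ) *
      star (hA.1.eigenvectorUnitary : Matrix n n ℂ) = 1 :=
    Matrix.mem_unitaryGroup_iff.mp hA.1.eigenvectorUnitary.2
  have hinv : ((t:ℂ) • A + (s:ℂ) • 1)⁻¹ = (hA.1.eigenvectorUnitary : Matrix n n ℂ) *
      Matrix.diagonal (fun i => (((t * hA.1.eigenvalues i + s)⁻¹ : ℝ) : ℂ)) *
      star (hA.1.eigenvectorUnitary : Matrix n n ℂ) := by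
    apply Matrix.inv_eq_right_inv
    rw [add_smul_one_spectral hA.1 t s, unitary_conj_mul hA.1.eigenvectorUnitary.2,
      Matrix.diagonal_mul_diagonal]
    have hfun : (fun i => ((t * hA.1.eigenvalues i + s : ℝ) : ℂ) *
        (((t * hA.1.eigenvalues i + s)⁻¹ : ℝ) : ℂ)) = fun _ : n => (1:ℂ) := by
      funext i
      rw [← Complex.ofReal_mul, mul_inv_cancel₀ (hpos i).ne']
      simp
    rw [hfun, Matrix.diagonal_one, Matrix.mul_one, hU]
  rw [hinv, smul_spectral hA.1 t, unitary_conj_mul hA.1.eigenvectorUnitary.2,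
    Matrix.diagonal_mul_diagonal]
  have hfun : (fun i => ((t * hA.1.eigenvalues i : ℝ) : ℂ) *
      (((t * hA.1.eigenvalues i + s)⁻¹ : ℝ) : ℂ))
      = fun i => ((t * hA.1.eigenvalues i / (t * hA.1.eigenvalues i + s) : ℝ) : ℂ) := by
    funext i
    rw [← Complex.ofReal_mul]
    norm_num [div_eq_mul_inv]
  rw [hfun]
  exact trace_unitary_conj_diag _ C

end spectral

lemma ofReal_mul_re' (r : ℝ) (z : ℂ) : ((r:ℂ) * z).re = r * z.re := by
  simp [Complex.mul_re]

lemma rep {A C : Matrix n n ℂ} (hA : A.PosSemidef) (hC : C.PosSemidef) {t β : ℝ} (ht : 0 ≤ t)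
    (h0 : 0 < β) (h1 : β < 1) :
    IntegrableOn (fun s : ℝ =>
      s ^ (β - 1) * (((t:ℂ) • A * ((t:ℂ) • A + (s:ℂ) • 1)⁻¹ * C).trace).re) (Ioi 0)
    ∧ ∫ s in Ioi (0:ℝ),
        s ^ (β - 1) * (((t:ℂ) • A * ((t:ℂ) • A + (s:ℂ) • 1)⁻¹ * C).trace).re
      = t ^ β * ((mpow A β * C).trace).re * ∫ u in Ioi (0:ℝ), u ^ (β - 1) / (1 + u) := by
  classical
  set d : n → ℝ := hA.1.eigenvalues with hd
  set c : n → ℝ := fun i => ((star (hA.1.eigenvectorUnitary : Matrix n n ℂ) * C *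
      (hA.1.eigenvectorUnitary : Matrix n n ℂ)) i i).re with hc
  have hre : ∀ s : ℝ, 0 < s →
      (((t:ℂ) • A * ((t:ℂ) • A + (s:ℂ) • 1)⁻¹ * C).trace).re
        = ∑ i, (t * d i / (t * d i + s)) * c i := by
    intro s hs
    rw [resolvent_trace_formula hA C ht hs, Complex.re_sum]
    exact Finset.sum_congr rfl fun i _ => ofReal_mul_re' _ _
  have heq : EqOn (fun s : ℝ =>
      s ^ (β - 1) * (((t:ℂ) • A * ((t:ℂ) • A + (s:ℂ) • 1)⁻¹ * C).trace).re)
      (fun s : ℝ => ∑ i, c i * (s ^ (β - 1) * (t * d i / (t * d i + s)))) (Ioi 0) := by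
    intro s hs
    simp only
    rw [hre s hs, Finset.mul_sum]
    exact Finset.sum_congr rfl fun i _ => by ring
  have hint : ∀ i : n, IntegrableOn
      (fun s : ℝ => c i * (s ^ (β - 1) * (t * d i / (t * d i + s)))) (Ioi 0) :=
    fun i => (scalar_integrable h0 h1 (mul_nonneg ht (hA.eigenvalues_nonneg i))).const_mul _
  have hintF : IntegrableOn
      (fun s : ℝ => ∑ i, c i * (s ^ (β - 1) * (t * d i / (t * d i + s)))) (Ioi 0) :=
    integrable_finset_sum _ fun i _ => hint i
  have hI1 := hintF.congr_fun heq.symm measurableSet_Ioi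
  refine ⟨hI1, ?_⟩
  rw [setIntegral_congr_fun measurableSet_Ioi heq,
    integral_finset_sum _ fun i _ => hint i]
  have hm : ((mpow A β * C).trace).re = ∑ i, d i ^ β * c i := by
    rw [mpow_trace_formula hA.1 β C, Complex.re_sum]
    exact Finset.sum_congr rfl fun i _ => ofReal_mul_re' _ _
  rw [hm]
  have hterm : ∀ i ∈ Finset.univ, (∫ s in Ioi (0:ℝ), c i * (s ^ (β - 1) * (t * d i / (t * d i + s))))
      = t ^ β * (d i ^ β * c i) * ∫ u in Ioi (0:ℝ), u ^ (β - 1) / (1 + u) := by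
    intro i _
    rw [MeasureTheory.integral_const_mul, scalar_integral h0 h1 (mul_nonneg ht (hA.eigenvalues_nonneg i)),
      Real.mul_rpow ht (hA.eigenvalues_nonneg i)]
    ring
  rw [Finset.sum_congr rfl hterm, ← Finset.sum_mul, ← Finset.mul_sum]

lemma psd_smul {ρ : Matrix n n ℂ} (h : ρ.PosSemidef) {p : ℝ} (hp : 0 ≤ p) :
    ((p:ℂ) • ρ).PosSemidef := by
  refine Matrix.PosSemidef.of_dotProduct_mulVec_nonneg ?_ ?_
  · unfold Matrix.IsHermitian
    rw [Matrix.conjTranspose_smul, h.1.eq]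
    norm_num [Complex.star_def, Complex.conj_ofReal]
  · intro x
    rw [Matrix.smul_mulVec, dotProduct_smul, smul_eq_mul]
    exact mul_nonneg (Complex.zero_le_real.mpr hp) (h.dotProduct_mulVec_nonneg x)

lemma core_lt {ρx ρbar : Matrix n n ℂ} (hx : ρx.PosSemidef) (hb : ρbar.PosSemidef)
    {p : ℝ} (hp : 0 ≤ p) (hsub : (ρbar - (p:ℂ) • ρx).PosSemidef)
    {β : ℝ} (h0 : 0 < β) (h1 : β < 1) :
    p ^ β * ((mpow ρx β * ρx).trace).re ≤ ((mpow ρbar β * ρx).trace).re := by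
  have hI := base_pos h0 h1
  obtain ⟨hint1, hval1⟩ := rep hx hx hp h0 h1
  obtain ⟨hint2, hval2⟩ := rep hb hx (zero_le_one) h0 h1
  have hmono : ∀ s ∈ Ioi (0:ℝ),
      s ^ (β-1) * (((p:ℂ) • ρx * ((p:ℂ) • ρx + (s:ℂ) • 1)⁻¹ * ρx).trace).re
        ≤ s ^ (β-1) * ((((1:ℝ):ℂ) • ρbar * (((1:ℝ):ℂ) • ρbar + (s:ℂ) • 1)⁻¹ * ρx).trace).re := by
    intro s hs
    apply mul_le_mul_of_nonneg_left _ (Real.rpow_nonneg (le_of_lt hs) _)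
    simp only [Complex.ofReal_one, one_smul]
    exact resolvent_trace_mono (psd_smul hx hp) hb hsub hx hs
  have hle := setIntegral_mono_on hint1 hint2 measurableSet_Ioi hmono
  rw [hval1, hval2, Real.one_rpow, one_mul] at hle
  exact le_of_mul_le_mul_right hle hI

lemma mpow_one_eq {A : Matrix n n ℂ} (hA : A.PosSemidef) : mpow A 1 = A := by
  rw [mpow, funCalc, dif_pos hA.1]
  conv_rhs => rw [hA.1.spectral_theorem, Unitary.conjStarAlgAut_apply]
  have hfun : (fun i => ((hA.1.eigenvalues i ^ (1:ℝ) : ℝ) : ℂ))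
      = (RCLike.ofReal ∘ hA.1.eigenvalues : n → ℂ) := by
    funext i
    simp [Function.comp, Real.rpow_one]
  rw [hfun]

lemma mpow_trace_succ {A : Matrix n n ℂ} (hA : A.PosSemidef) {β : ℝ} (h0 : 0 < β) :
    ((mpow A (β+1)).trace).re = ((mpow A β * A).trace).re := by
  have hU : star (hA.1.eigenvectorUnitary : Matrix n n ℂ) *
      (hA.1.eigenvectorUnitary : Matrix n n ℂ) = 1 :=
    Matrix.mem_unitaryGroup_iff'.mp hA.1.eigenvectorUnitary.2
  have hL : (mpow A (β+1)).trace = (mpow A (β+1) * 1).trace := by rw [Matrix.mul_one]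
  rw [hL, mpow_trace_formula hA.1 (β+1) 1, mpow_trace_formula hA.1 β A,
    (by simpa using hA.1.conjStarAlgAut_star_eigenvectorUnitary :
      star (hA.1.eigenvectorUnitary : Matrix n n ℂ) * A * (hA.1.eigenvectorUnitary : Matrix n n ℂ)
        = Matrix.diagonal (RCLike.ofReal ∘ hA.1.eigenvalues))]
  rw [Matrix.mul_one, hU]
  rw [Complex.re_sum, Complex.re_sum]
  refine Finset.sum_congr rfl fun i _ => ?_
  have hdd : hA.1.eigenvalues i ^ (β+1) = hA.1.eigenvalues i ^ β * hA.1.eigenvalues i := by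
    rcases (hA.eigenvalues_nonneg i).eq_or_lt with h | h
    · rw [← h, Real.zero_rpow (by linarith), Real.zero_rpow h0.ne', zero_mul]
    · rw [Real.rpow_add_one h.ne']
  simp [Matrix.diagonal_apply_eq, Matrix.one_apply_eq, Function.comp, hdd, Complex.mul_re]

lemma core {ρx ρbar : Matrix n n ℂ} (hx : ρx.PosSemidef) (hb : ρbar.PosSemidef)
    {p : ℝ} (hp : 0 ≤ p) (hsub : (ρbar - (p:ℂ) • ρx).PosSemidef)
    {β : ℝ} (h0 : 0 < β) (h1 : β ≤ 1) :
    p ^ β * ((mpow ρx β * ρx).trace).re ≤ ((mpow ρbar β * ρx).trace).re := by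
  rcases h1.lt_or_eq with h | rfl
  · exact core_lt hx hb hp hsub h0 h
  · rw [mpow_one_eq hx, mpow_one_eq hb, Real.rpow_one]
    have h0' := trace_psd_mul_nonneg hsub hx
    rw [Matrix.sub_mul, Matrix.trace_sub, Complex.sub_re, Matrix.smul_mul,
      Matrix.trace_smul] at h0'
    have : ((p:ℂ) • (ρx * ρx).trace).re = p * ((ρx * ρx).trace).re := by
      rw [smul_eq_mul, ofReal_mul_re']
    rw [this] at h0'
    linarith

lemma psd_sum {ι : Type*} (s : Finset ι) (f : ι → Matrix n n ℂ)
    (h : ∀ i ∈ s, (f i).PosSemidef) : (∑ i ∈ s, f i).PosSemidef := by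
  classical
  induction s using Finset.induction with
  | empty => simpa using Matrix.PosSemidef.zero
  | @insert a s ha ih =>
    rw [Finset.sum_insert ha]
    exact (h _ (Finset.mem_insert_self a s)).add
      (ih fun i hi => h i (Finset.mem_insert_of_mem hi))


end scalarIntegral

theorem trace_rpow_mix_ge {n : Type*} [Fintype n] [DecidableEq n] {m : ℕ}
    (ρ : Fin m → Matrix n n ℂ) (hρ : ∀ x, IsDensity (ρ x))
    (p : Fin m → ℝ) (hp : ∀ x, 0 ≤ p x) (hp1 : ∑ x, p x = 1)
    (α : ℝ) (hα1 : 1 < α) (hα2 : α ≤ 2) :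
    ∑ x, p x ^ α * (mpow (ρ x) α).trace.re
      ≤ (mpow (∑ x, (p x : ℂ) • ρ x) α).trace.re := by
  classical
  set ρb := ∑ x, (p x : ℂ) • ρ x with hρb
  have hb : ρb.PosSemidef := psd_sum _ _ fun x _ => psd_smul (hρ x).1 (hp x)
  set β := α - 1 with hβ
  have hβ0 : 0 < β := by simp only [hβ]; linarith
  have hβ1 : β ≤ 1 := by simp only [hβ]; linarith
  have hβα : β + 1 = α := by simp only [hβ]; ring
  have hsplit : ∀ (A : Matrix n n ℂ), A.PosSemidef →
      ((mpow A α).trace).re = ((mpow A β * A).trace).re := by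
    intro A hA
    rw [← hβα]
    exact mpow_trace_succ hA hβ0
  have hsub : ∀ x, (ρb - (p x : ℂ) • ρ x).PosSemidef := by
    intro x
    have he : ρb - (p x : ℂ) • ρ x = ∑ y ∈ Finset.univ.erase x, (p y : ℂ) • ρ y := by
      rw [sub_eq_iff_eq_add, hρb]
      exact (Finset.sum_erase_add _ _ (Finset.mem_univ x)).symm
    rw [he]
    exact psd_sum _ _ fun y _ => psd_smul (hρ y).1 (hp y)
  calc ∑ x, p x ^ α * (mpow (ρ x) α).trace.re
      = ∑ x, p x * (p x ^ β * ((mpow (ρ x) β * ρ x).trace).re) := by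
        refine Finset.sum_congr rfl fun x _ => ?_
        rw [hsplit _ (hρ x).1]
        have hpa : p x ^ α = p x * p x ^ β := by
          rcases (hp x).eq_or_lt with h | h
          · rw [← h, Real.zero_rpow (by linarith : α ≠ 0), Real.zero_rpow hβ0.ne']
            ring
          · rw [← hβα, Real.rpow_add_one h.ne']
            ring
        rw [hpa]
        ring
    _ ≤ ∑ x, p x * ((mpow ρb β * ρ x).trace).re := by
        refine Finset.sum_le_sum fun x _ => ?_
        exact mul_le_mul_of_nonneg_left
          (core (hρ x).1 hb (hp x) (hsub x) hβ0 hβ1) (hp x)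
    _ = ((mpow ρb β * ρb).trace).re := by
        have hmul : mpow ρb β * ρb = ∑ x, (p x : ℂ) • (mpow ρb β * ρ x) := by
          conv_lhs => rw [hρb]
          rw [Finset.mul_sum]
          exact Finset.sum_congr rfl fun x _ => Matrix.mul_smul _ _ _
        rw [hmul, Matrix.trace_sum, Complex.re_sum]
        exact Finset.sum_congr rfl fun x _ => by
          rw [Matrix.trace_smul, smul_eq_mul, ofReal_mul_re']
    _ = ((mpow ρb α).trace).re := (hsplit _ hb).symm
end

section
/- Let ρ_1,…,ρ_m be density matrices, p a probability vector of length m, and α ∈ (1,2]. Then m^{α−1} · Σ_x p_x^α Tr(ρ_x^α) ≥ Tr((Σ_x p_x ρ_x)^α). -/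
open Matrix BigOperators Kronecker ComplexOrder

section Aux

lemma trace_funCalc_eq {n : Type*} [Fintype n] [DecidableEq n] {A : Matrix n n ℂ}
    (h : A.IsHermitian) (f : ℝ → ℝ) :
    (funCalc f A).trace = ∑ i, (f (h.eigenvalues i) : ℂ) := by
  rw [funCalc, dif_pos h, Matrix.trace_mul_cycle,
    (Matrix.mem_unitaryGroup_iff'.mp h.eigenvectorUnitary.2), one_mul, Matrix.trace_diagonal]

lemma dot_spectral {n : Type*} [Fintype n] [DecidableEq n] {A : Matrix n n ℂ}
    (h : A.IsHermitian) (u : n → ℂ) :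
    star u ⬝ᵥ (A *ᵥ u) = ∑ j, (h.eigenvalues j : ℂ) *
      Complex.normSq ((star (h.eigenvectorUnitary : Matrix n n ℂ) *ᵥ u) j) := by
  set U := (h.eigenvectorUnitary : Matrix n n ℂ) with hU
  have hw : star (star U *ᵥ u) = star u ᵥ* U := by
    rw [Matrix.star_mulVec, Matrix.star_eq_conjTranspose, Matrix.conjTranspose_conjTranspose]
  conv_lhs => rw [h.spectral_theorem, Unitary.conjStarAlgAut_apply]
  rw [← hU, Matrix.mul_assoc, ← Matrix.mulVec_mulVec, Matrix.dotProduct_mulVec, ← hw,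
    ← Matrix.mulVec_mulVec]
  set w := star U *ᵥ u with hww
  simp only [dotProduct, Pi.star_apply, Matrix.mulVec_diagonal, Function.comp_apply,
    RCLike.star_def, RCLike.ofReal, Complex.coe_algebraMap]
  refine Finset.sum_congr rfl fun j _ => ?_
  have h2 : (starRingEnd ℂ) (w j) * ((h.eigenvalues j : ℂ) * w j)
      = (h.eigenvalues j : ℂ) * (w j * (starRingEnd ℂ) (w j)) := by ring
  rw [h2, Complex.mul_conj]

lemma unitary_row_normSq {n : Type*} [Fintype n] [DecidableEq n] {M : Matrix n n ℂ}
    (hM : M ∈ Matrix.unitaryGroup n ℂ) (i : n) :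
    ∑ j, Complex.normSq (M i j) = 1 := by
  have h1 : (M * star M) i i = 1 := by
    rw [Matrix.mem_unitaryGroup_iff.mp hM, Matrix.one_apply_eq]
  have h2 : (M * star M) i i = ((∑ j, Complex.normSq (M i j) : ℝ) : ℂ) := by
    push_cast
    rw [Matrix.mul_apply]
    refine Finset.sum_congr rfl fun j _ => ?_
    rw [Matrix.star_apply, RCLike.star_def, Complex.mul_conj]
  have := h2.symm.trans h1
  exact_mod_cast this


lemma sum_mulVec' {n : Type*} [Fintype n] {ι : Type*} (s : Finset ι)
    (A : ι → Matrix n n ℂ) (v : n → ℂ) :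
    (∑ i ∈ s, A i) *ᵥ v = ∑ i ∈ s, A i *ᵥ v := by
  ext k
  simp only [Matrix.mulVec, dotProduct, Finset.sum_apply, Matrix.sum_apply,
    Finset.sum_mul]
  exact Finset.sum_comm


lemma dotProduct_sum' {n : Type*} [Fintype n] {ι : Type*} (s : Finset ι)
    (v : n → ℂ) (w : ι → n → ℂ) :
    v ⬝ᵥ (∑ i ∈ s, w i) = ∑ i ∈ s, v ⬝ᵥ w i := by
  simp only [dotProduct, Finset.sum_apply, Finset.mul_sum]
  exact Finset.sum_comm

end Aux

theorem trace_rpow_mix_le {n : Type*} [Fintype n] [DecidableEq n] {m : ℕ}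
    (ρ : Fin m → Matrix n n ℂ) (hρ : ∀ x, IsDensity (ρ x))
    (p : Fin m → ℝ) (hp : ∀ x, 0 ≤ p x) (hp1 : ∑ x, p x = 1)
    (α : ℝ) (hα1 : 1 < α) (hα2 : α ≤ 2) :
    (mpow (∑ x, (p x : ℂ) • ρ x) α).trace.re
      ≤ (m : ℝ) ^ (α - 1) * ∑ x, p x ^ α * (mpow (ρ x) α).trace.re := by
  classical
  have hα1' : (1:ℝ) ≤ α := hα1.le
  have hm : 0 < m := by
    by_contra h
    push_neg at h
    interval_cases m
    simp at hp1
  have hmR : (0:ℝ) < (m:ℝ) := by exact_mod_cast hm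
  set σ : Matrix n n ℂ := ∑ x, (p x : ℂ) • ρ x with hσdef
  have hσps : σ.PosSemidef := by
    refine Matrix.PosSemidef.of_dotProduct_mulVec_nonneg ?_ ?_
    · show σᴴ = σ
      rw [Matrix.conjTranspose_sum]
      refine Finset.sum_congr rfl fun x _ => ?_
      rw [Matrix.conjTranspose_smul, (hρ x).1.1.eq]
      congr 1
      simp [Complex.conj_ofReal]
    · intro v
      rw [sum_mulVec', dotProduct_sum']
      refine Finset.sum_nonneg fun x _ => ?_
      rw [Matrix.smul_mulVec, dotProduct_smul, smul_eq_mul]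
      refine mul_nonneg ?_ ((hρ x).1.dotProduct_mulVec_nonneg v)
      rw [Complex.le_def]
      simp [hp x]
  have hσH : σ.IsHermitian := hσps.1
  set U : Matrix n n ℂ := (hσH.eigenvectorUnitary : Matrix n n ℂ) with hUdef
  set lam : n → ℝ := hσH.eigenvalues with hlamdef
  have hlam0 : ∀ i, 0 ≤ lam i := hσps.eigenvalues_nonneg
  set u : n → n → ℂ := fun i j => U j i with hudef
  -- star U *ᵥ u i is the standard basis vector
  have hUu : ∀ i k, (star U *ᵥ u i) k = if k = i then 1 else 0 := by
    intro i k
    have : (star U *ᵥ u i) k = (star U * U) k i := by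
      simp [Matrix.mulVec, Matrix.mul_apply, dotProduct, hudef]
    rw [this, Matrix.mem_unitaryGroup_iff'.mp hσH.eigenvectorUnitary.2, Matrix.one_apply]
  set q : Fin m → n → ℝ := fun x i => (star (u i) ⬝ᵥ (ρ x *ᵥ u i)).re with hqdef
  have hq0 : ∀ x i, 0 ≤ q x i := by
    intro x i
    have := (hρ x).1.dotProduct_mulVec_nonneg (u i)
    rw [Complex.le_def] at this
    simpa using this.1
  -- eigenvalue as mixture of diagonal values
  have hlam_eq : ∀ i, lam i = ∑ x, p x * q x i := by
    intro i
    have h1 : star (u i) ⬝ᵥ (σ *ᵥ u i) = (lam i : ℂ) := by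
      rw [dot_spectral hσH (u i)]
      rw [Finset.sum_eq_single i]
      · rw [hUu i i]; simp; rfl
      · intro j _ hj; rw [hUu i j, if_neg hj]; simp
      · intro hi; exact absurd (Finset.mem_univ i) hi
    have h2 : star (u i) ⬝ᵥ (σ *ᵥ u i) = ∑ x, (p x : ℂ) * (star (u i) ⬝ᵥ (ρ x *ᵥ u i)) := by
      rw [hσdef, sum_mulVec', dotProduct_sum']
      refine Finset.sum_congr rfl fun x _ => ?_
      rw [Matrix.smul_mulVec, dotProduct_smul, smul_eq_mul]
    have h3 := h1.symm.trans h2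
    have h4 := congrArg Complex.re h3
    simpa [Complex.ofReal_re, Complex.re_sum, Complex.mul_re, Complex.ofReal_im] using h4
  -- the trace of mpow σ α
  have hLHS : (mpow σ α).trace.re = ∑ i, lam i ^ α := by
    rw [mpow, trace_funCalc_eq hσH]
    simp [Complex.re_sum]; rfl
  -- Peierls step: for each x
  have hPeierls : ∀ x, ∑ i, q x i ^ α ≤ (mpow (ρ x) α).trace.re := by
    intro x
    have hxps := (hρ x).1
    have hxH : (ρ x).IsHermitian := hxps.1
    set V : Matrix n n ℂ := (hxH.eigenvectorUnitary : Matrix n n ℂ) with hVdef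
    set ν : n → ℝ := hxH.eigenvalues with hνdef
    have hν0 : ∀ j, 0 ≤ ν j := hxps.eigenvalues_nonneg
    set c : n → n → ℝ := fun i j => Complex.normSq ((star V *ᵥ u i) j) with hcdef
    have hentry : ∀ i j, (star V *ᵥ u i) j = (star V * U) j i := by
      intro i j
      simp [Matrix.mulVec, Matrix.mul_apply, dotProduct, hudef]
    have hMun : (star V * U) ∈ Matrix.unitaryGroup n ℂ :=
      mul_mem (Unitary.star_mem hxH.eigenvectorUnitary.2) hσH.eigenvectorUnitary.2
    have hrow : ∀ i, ∑ j, c i j = 1 := by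
      intro i
      have := unitary_row_normSq (Unitary.star_mem hMun) i
      rw [← this]
      refine Finset.sum_congr rfl fun j _ => ?_
      rw [hcdef]
      simp only [hentry i j, Matrix.star_apply, RCLike.star_def, Complex.normSq_conj]
    have hcol : ∀ j, ∑ i, c i j = 1 := by
      intro j
      have := unitary_row_normSq hMun j
      rw [← this]
      refine Finset.sum_congr rfl fun i _ => ?_
      exact congrArg Complex.normSq (hentry i j)
    have hq_eq : ∀ i, q x i = ∑ j, c i j • ν j := by
      intro i
      show (star (u i) ⬝ᵥ (ρ x *ᵥ u i)).re = _
      have h1 := dot_spectral hxH (u i)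
      rw [← hVdef, ← hνdef] at h1
      have h2 := congrArg Complex.re h1
      rw [h2, Complex.re_sum]
      refine Finset.sum_congr rfl fun j _ => ?_
      rw [smul_eq_mul]
      simp [Complex.mul_re, mul_comm]
      exact Or.inl rfl
    have hJen : ∀ i, q x i ^ α ≤ ∑ j, c i j * ν j ^ α := by
      intro i
      have key := (convexOn_rpow hα1').map_sum_le (t := Finset.univ)
        (w := fun j => c i j) (p := ν)
        (fun j _ => Complex.normSq_nonneg _) (hrow i)
        (fun j _ => Set.mem_Ici.mpr (hν0 j))
      rw [← hq_eq i] at key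
      simpa [smul_eq_mul] using key
    have htr : (mpow (ρ x) α).trace.re = ∑ j, ν j ^ α := by
      rw [mpow, trace_funCalc_eq hxH, Complex.re_sum]
      exact Finset.sum_congr rfl fun j _ => by simp; rfl
    rw [htr]
    calc ∑ i, q x i ^ α ≤ ∑ i, ∑ j, c i j * ν j ^ α :=
          Finset.sum_le_sum fun i _ => hJen i
      _ = ∑ j, (∑ i, c i j) * ν j ^ α := by
          rw [Finset.sum_comm]
          exact Finset.sum_congr rfl fun j _ => by rw [Finset.sum_mul]
      _ = ∑ j, ν j ^ α := by
          exact Finset.sum_congr rfl fun j _ => by rw [hcol j, one_mul]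
  -- Jensen step 1
  have hJ1 : ∀ i, lam i ^ α ≤ (m : ℝ) ^ (α - 1) * ∑ x, p x ^ α * q x i ^ α := by
    intro i
    have hconv := convexOn_rpow hα1'
    have hw1 : ∑ _x : Fin m, (1/(m:ℝ)) = 1 := by
      rw [Finset.sum_const, Finset.card_univ, Fintype.card_fin, nsmul_eq_mul]
      field_simp
    have key := hconv.map_sum_le (t := Finset.univ)
      (w := fun _ : Fin m => (1/(m:ℝ))) (p := fun x => (m:ℝ) * p x * q x i)
      (fun x _ => by positivity) hw1
      (fun x _ => Set.mem_Ici.mpr (mul_nonneg (mul_nonneg hmR.le (hp x)) (hq0 x i)))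
    have hsum : ∑ x : Fin m, (1/(m:ℝ)) • ((m:ℝ) * p x * q x i) = lam i := by
      rw [hlam_eq i]
      refine Finset.sum_congr rfl fun x _ => ?_
      rw [smul_eq_mul]
      field_simp
    rw [hsum] at key
    refine key.trans (le_of_eq ?_)
    rw [Finset.mul_sum]
    refine Finset.sum_congr rfl fun x _ => ?_
    rw [smul_eq_mul, Real.mul_rpow (mul_nonneg hmR.le (hp x)) (hq0 x i),
      Real.mul_rpow (hmR.le) (hp x), Real.rpow_sub hmR, Real.rpow_one]
    field_simp
  calc (mpow σ α).trace.re = ∑ i, lam i ^ α := hLHS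
    _ ≤ ∑ i, (m : ℝ) ^ (α - 1) * ∑ x, p x ^ α * q x i ^ α :=
        Finset.sum_le_sum fun i _ => hJ1 i
    _ = (m : ℝ) ^ (α - 1) * ∑ x, p x ^ α * ∑ i, q x i ^ α := by
        rw [← Finset.mul_sum, Finset.sum_comm]
        congr 1
        refine Finset.sum_congr rfl fun x _ => ?_
        rw [Finset.mul_sum]
    _ ≤ (m : ℝ) ^ (α - 1) * ∑ x, p x ^ α * (mpow (ρ x) α).trace.re := by
        refine mul_le_mul_of_nonneg_left ?_ (Real.rpow_nonneg hmR.le _)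
        exact Finset.sum_le_sum fun x _ => mul_le_mul_of_nonneg_left (hPeierls x)
          (Real.rpow_nonneg (hp x) _)
end

section
/- Let ρ_1,…,ρ_m be density matrices, p a probability vector, and α > 1. Then Σ_x p_x (Tr ρ_x^α)^{1/α} ≤ m^{(α−1)/α} · (Tr((Σ_x p_x ρ_x)^α))^{1/α}. -/
open Matrix BigOperators Kronecker ComplexOrder

namespace McAux

variable {n : Type*} [Fintype n] [DecidableEq n] {A : Matrix n n ℂ}

theorem _root_.Matrix.IsHermitian.star_mul_self_mul_eq_diagonal (hA : A.IsHermitian) :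
    star (hA.eigenvectorUnitary : Matrix n n ℂ) * A * (hA.eigenvectorUnitary : Matrix n n ℂ) =
      Matrix.diagonal (RCLike.ofReal ∘ hA.eigenvalues) := by
  have h := hA.spectral_theorem
  rw [Unitary.conjStarAlgAut_apply] at h
  calc star (hA.eigenvectorUnitary : Matrix n n ℂ) * A * (hA.eigenvectorUnitary : Matrix n n ℂ)
      = star (hA.eigenvectorUnitary : Matrix n n ℂ) * ((hA.eigenvectorUnitary : Matrix n n ℂ) *
          Matrix.diagonal (RCLike.ofReal ∘ hA.eigenvalues) * star (hA.eigenvectorUnitary : Matrix n n ℂ))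
          * (hA.eigenvectorUnitary : Matrix n n ℂ) := by rw [← h]
    _ = _ := by
      simp only [Matrix.mul_assoc, Unitary.coe_star_mul_self, Matrix.mul_one]
      simp only [← Matrix.mul_assoc, Unitary.coe_star_mul_self, Matrix.one_mul]

lemma funCalc_def (hA : A.IsHermitian) (f : ℝ → ℝ) :
    funCalc f A = (hA.eigenvectorUnitary : Matrix n n ℂ) *
      Matrix.diagonal (fun i => (f (hA.eigenvalues i) : ℂ)) *
      star (hA.eigenvectorUnitary : Matrix n n ℂ) := dif_pos hA

lemma star_mul_eigU (hA : A.IsHermitian) :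
    star (hA.eigenvectorUnitary : Matrix n n ℂ) * (hA.eigenvectorUnitary : Matrix n n ℂ) = 1 :=
  Unitary.coe_star_mul_self hA.eigenvectorUnitary

lemma eigU_mul_star (hA : A.IsHermitian) :
    (hA.eigenvectorUnitary : Matrix n n ℂ) * star (hA.eigenvectorUnitary : Matrix n n ℂ) = 1 :=
  Unitary.coe_mul_star_self hA.eigenvectorUnitary

lemma funCalc_mul (hA : A.IsHermitian) (f g : ℝ → ℝ) :
    funCalc f A * funCalc g A = funCalc (fun x => f x * g x) A := by
  rw [funCalc_def hA f, funCalc_def hA g, funCalc_def hA]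
  set U := (hA.eigenvectorUnitary : Matrix n n ℂ)
  have h1 : star U * U = 1 := star_mul_eigU hA
  calc (U * Matrix.diagonal (fun i => (f (hA.eigenvalues i) : ℂ)) * star U) *
        (U * Matrix.diagonal (fun i => (g (hA.eigenvalues i) : ℂ)) * star U)
      = U * (Matrix.diagonal (fun i => (f (hA.eigenvalues i) : ℂ)) * (star U * U) *
          Matrix.diagonal (fun i => (g (hA.eigenvalues i) : ℂ))) * star U := by
        simp only [Matrix.mul_assoc]
    _ = U * Matrix.diagonal (fun i => (f (hA.eigenvalues i) * g (hA.eigenvalues i) : ℂ)) * star U := by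
        rw [h1, Matrix.mul_one, Matrix.diagonal_mul_diagonal]
    _ = _ := by push_cast; rfl

lemma funCalc_add (hA : A.IsHermitian) (f g : ℝ → ℝ) :
    funCalc f A + funCalc g A = funCalc (fun x => f x + g x) A := by
  rw [funCalc_def hA f, funCalc_def hA g, funCalc_def hA]
  rw [← Matrix.add_mul, ← Matrix.mul_add, Matrix.diagonal_add]
  push_cast; rfl

lemma funCalc_one (hA : A.IsHermitian) : funCalc (fun _ => 1) A = 1 := by
  rw [funCalc_def hA]
  simp [Matrix.diagonal_one, eigU_mul_star hA]

lemma funCalc_id (hA : A.IsHermitian) : funCalc (fun x => x) A = A := by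
  rw [funCalc_def hA]
  convert hA.spectral_theorem.symm using 2
  rfl

lemma funCalc_smul (hA : A.IsHermitian) (r : ℝ) (f : ℝ → ℝ) :
    funCalc (fun x => r * f x) A = (r : ℂ) • funCalc f A := by
  rw [funCalc_def hA, funCalc_def hA]
  have h : (Matrix.diagonal fun i => ((r * f (hA.eigenvalues i) : ℝ) : ℂ)) =
      (r : ℂ) • (Matrix.diagonal fun i => ((f (hA.eigenvalues i) : ℝ) : ℂ)) := by
    ext i j
    simp only [Matrix.diagonal_apply, Matrix.smul_apply, Pi.smul_apply, smul_eq_mul]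
    by_cases hij : i = j <;> simp [hij] <;> push_cast <;> ring
  rw [h, Matrix.mul_smul, Matrix.smul_mul]

lemma funCalc_congr (hA : A.IsHermitian) {f g : ℝ → ℝ}
    (h : ∀ i, f (hA.eigenvalues i) = g (hA.eigenvalues i)) : funCalc f A = funCalc g A := by
  rw [funCalc_def hA, funCalc_def hA]
  congr 2
  ext i j
  by_cases hij : i = j <;> simp [Matrix.diagonal, hij, h]

lemma funCalc_isHermitian (hA : A.IsHermitian) (f : ℝ → ℝ) : (funCalc f A).IsHermitian := by
  rw [funCalc_def hA]
  unfold Matrix.IsHermitian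
  simp only [Matrix.conjTranspose_mul, Matrix.star_eq_conjTranspose,
    Matrix.conjTranspose_conjTranspose, Matrix.diagonal_conjTranspose, Matrix.mul_assoc]
  congr 2
  ext i
  simp [Pi.star_def, ← Complex.ofReal_mul]

lemma funCalc_posSemidef (hA : A.IsHermitian) {f : ℝ → ℝ}
    (hf : ∀ i, 0 ≤ f (hA.eigenvalues i)) : (funCalc f A).PosSemidef := by
  rw [funCalc_def hA]
  have : (Matrix.diagonal (fun i => (f (hA.eigenvalues i) : ℂ))).PosSemidef := by
    rw [Matrix.posSemidef_diagonal_iff]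
    intro i
    simpa using (by exact_mod_cast hf i : (0:ℂ) ≤ (f (hA.eigenvalues i) : ℂ))
  simpa [Matrix.star_eq_conjTranspose] using
    this.mul_mul_conjTranspose_same (hA.eigenvectorUnitary : Matrix n n ℂ)

lemma funCalc_trace (hA : A.IsHermitian) (f : ℝ → ℝ) :
    (funCalc f A).trace = ((∑ i, f (hA.eigenvalues i) : ℝ) : ℂ) := by
  rw [funCalc_def hA, Matrix.trace_mul_cycle, star_mul_eigU hA,
    Matrix.one_mul, Matrix.trace_diagonal]
  push_cast
  rfl


lemma conj_entry (U M : Matrix n n ℂ) (i : n) :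
    (star U * M * U) i i =
      dotProduct (star (fun k => U k i)) (M.mulVec (fun k => U k i)) := by
  simp only [Matrix.mul_apply, Matrix.star_apply, dotProduct, Matrix.mulVec,
    Pi.star_apply, Finset.sum_mul, Finset.mul_sum, Matrix.star_eq_conjTranspose,
    Matrix.conjTranspose_apply]
  rw [Finset.sum_comm]
  apply Finset.sum_congr rfl
  intro k _
  apply Finset.sum_congr rfl
  intro l _
  ring

lemma trace_mul_eq (A : Matrix n n ℂ) (hA : A.IsHermitian) (M : Matrix n n ℂ) :
    (A * M).trace = ∑ i, (hA.eigenvalues i : ℂ) *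
      dotProduct (star (fun k => (hA.eigenvectorUnitary : Matrix n n ℂ) k i))
        (M.mulVec (fun k => (hA.eigenvectorUnitary : Matrix n n ℂ) k i)) := by
  set U := (hA.eigenvectorUnitary : Matrix n n ℂ) with hU
  have h1 : A * M = U * (Matrix.diagonal (fun i => (hA.eigenvalues i : ℂ)) * (star U * M)) := by
    conv_lhs => rw [hA.spectral_theorem]
    simp only [Unitary.conjStarAlgAut_apply, Matrix.mul_assoc]
    rfl
  rw [h1, Matrix.trace_mul_comm]
  have h2 : (Matrix.diagonal (fun i => (hA.eigenvalues i : ℂ)) * (star U * M)) * U =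
      Matrix.diagonal (fun i => (hA.eigenvalues i : ℂ)) * (star U * M * U) := by
    simp only [Matrix.mul_assoc]
  rw [h2]
  rw [Matrix.trace]
  simp only [Matrix.diag_apply, Matrix.diagonal_mul]
  exact Finset.sum_congr rfl fun i _ => by rw [conj_entry]


lemma star_dot_self (v : n → ℂ) :
    dotProduct (star v) v = ((∑ k, Complex.normSq (v k) : ℝ) : ℂ) := by
  simp only [dotProduct, Pi.star_apply]
  push_cast
  exact Finset.sum_congr rfl fun k _ => by
    rw [Complex.star_def, mul_comm, Complex.mul_conj]

lemma qform (hA : A.IsHermitian) (f : ℝ → ℝ) (v : n → ℂ) :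
    dotProduct (star v) ((funCalc f A).mulVec v) =
      ((∑ j, f (hA.eigenvalues j) *
        Complex.normSq ((star (hA.eigenvectorUnitary : Matrix n n ℂ)).mulVec v j) : ℝ) : ℂ) := by
  rw [funCalc_def hA]
  set U := (hA.eigenvectorUnitary : Matrix n n ℂ) with hUdef
  set D := Matrix.diagonal (fun i => (f (hA.eigenvalues i) : ℂ)) with hD
  set w := (star U).mulVec v with hw
  have h1 : (U * D * star U) *ᵥ v = U *ᵥ (D *ᵥ w) := by
    rw [hw, Matrix.mulVec_mulVec, Matrix.mulVec_mulVec, Matrix.mul_assoc]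
  rw [h1, dotProduct_mulVec]
  have h2 : Matrix.vecMul (star v) U = star w := by
    rw [hw, Matrix.star_mulVec, Matrix.star_eq_conjTranspose, Matrix.conjTranspose_conjTranspose]
  rw [h2]
  have h3 : (D *ᵥ w) = fun j => (f (hA.eigenvalues j) : ℂ) * w j := by
    funext j
    rw [hD, Matrix.mulVec, _root_.diagonal_dotProduct]
  rw [h3]
  simp only [dotProduct, Pi.star_apply]
  push_cast
  exact Finset.sum_congr rfl fun j _ => by
    rw [Complex.star_def, mul_comm, mul_assoc, Complex.mul_conj]



lemma sum_normSq_w (hA : A.IsHermitian) (v : n → ℂ) :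
    (∑ j, Complex.normSq ((star (hA.eigenvectorUnitary : Matrix n n ℂ)).mulVec v j) : ℝ) =
      ∑ k, Complex.normSq (v k) := by
  have h := qform hA (fun _ => 1) v
  rw [funCalc_one hA, Matrix.one_mulVec, star_dot_self] at h
  simp only [one_mul] at h
  exact_mod_cast h.symm

lemma eig_entry (hA : A.IsHermitian) (i : n) :
    dotProduct (star (fun k => (hA.eigenvectorUnitary : Matrix n n ℂ) k i))
      (A.mulVec (fun k => (hA.eigenvectorUnitary : Matrix n n ℂ) k i)) = (hA.eigenvalues i : ℂ) := by
  rw [← conj_entry, hA.star_mul_self_mul_eq_diagonal, Matrix.diagonal_apply_eq]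
  rfl

lemma col_unit (hA : A.IsHermitian) (i : n) :
    dotProduct (star (fun k => (hA.eigenvectorUnitary : Matrix n n ℂ) k i))
      (fun k => (hA.eigenvectorUnitary : Matrix n n ℂ) k i) = 1 := by
  have h := conj_entry (hA.eigenvectorUnitary : Matrix n n ℂ) 1 i
  rw [Matrix.mul_one, star_mul_eigU hA, Matrix.one_mulVec] at h
  rw [← h, Matrix.one_apply_eq]

lemma resolvent_psd {A C : Matrix n n ℂ} (hA : A.PosSemidef) (hC : C.PosSemidef)
    {p t : ℝ} (hp : 0 ≤ p) (ht : 0 < t) (hAC : (C - (p : ℂ) • A).PosSemidef) :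
    (funCalc (fun x => (p * x + t)⁻¹) A - funCalc (fun x => (x + t)⁻¹) C).PosSemidef := by
  have hAh : A.IsHermitian := hA.1
  have hCh : C.IsHermitian := hC.1
  have hPA : ∀ i, 0 < p * hAh.eigenvalues i + t := fun i =>
    add_pos_of_nonneg_of_pos (mul_nonneg hp (hA.eigenvalues_nonneg i)) ht
  have hQC : ∀ i, 0 < hCh.eigenvalues i + t := fun i =>
    add_pos_of_nonneg_of_pos (hC.eigenvalues_nonneg i) ht
  set S := funCalc (fun x => (Real.sqrt (p * x + t))⁻¹) A with hS
  set T := funCalc (fun x => Real.sqrt (p * x + t)) A with hT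
  set P' := funCalc (fun x => (p * x + t)⁻¹) A with hP'
  set Q := funCalc (fun x => x + t) C with hQ
  set Q' := funCalc (fun x => (x + t)⁻¹) C with hQ'
  have hSh : S.IsHermitian := funCalc_isHermitian hAh _
  have hQh : Q.IsHermitian := funCalc_isHermitian hCh _
  have hTS : T * S = 1 := by
    rw [hT, hS, funCalc_mul hAh, ← funCalc_one hAh]
    exact funCalc_congr hAh fun i => mul_inv_cancel₀ (Real.sqrt_pos.2 (hPA i)).ne'
  have hST : S * T = 1 := by
    rw [hS, hT, funCalc_mul hAh, ← funCalc_one hAh]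
    exact funCalc_congr hAh fun i => inv_mul_cancel₀ (Real.sqrt_pos.2 (hPA i)).ne'
  have hSS : S * S = P' := by
    rw [hS, hP', funCalc_mul hAh]
    exact funCalc_congr hAh fun i => by
      rw [← mul_inv, Real.mul_self_sqrt (hPA i).le]
  have hSPS : S * funCalc (fun x => p * x + t) A * S = 1 := by
    rw [hS, funCalc_mul hAh, funCalc_mul hAh, ← funCalc_one hAh]
    exact funCalc_congr hAh fun i => by
      field_simp [Real.sqrt_ne_zero'.2 (hPA i), Real.mul_self_sqrt (hPA i).le]
      rw [Real.sq_sqrt (hPA i).le]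
  have hQQ' : Q * Q' = 1 := by
    rw [hQ, hQ', funCalc_mul hCh, ← funCalc_one hCh]
    exact funCalc_congr hCh fun i => mul_inv_cancel₀ (hQC i).ne'
  have hQ'Q : Q' * Q = 1 := by
    rw [hQ, hQ', funCalc_mul hCh, ← funCalc_one hCh]
    exact funCalc_congr hCh fun i => inv_mul_cancel₀ (hQC i).ne'
  have hQdiff : Q - funCalc (fun x => p * x + t) A = C - (p : ℂ) • A := by
    have e1 : Q = C + (t : ℂ) • 1 := by
      rw [hQ, ← funCalc_add hCh, funCalc_id hCh]
      congr 1
      rw [← funCalc_one hCh, ← funCalc_smul hCh t (fun _ => 1)]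
      exact funCalc_congr hCh fun i => (mul_one t).symm ▸ rfl
    have e2 : funCalc (fun x => p * x + t) A = (p : ℂ) • A + (t : ℂ) • 1 := by
      have ea : funCalc (fun x => p * x) A = (p : ℂ) • A := by
        rw [funCalc_smul hAh p (fun x => x), funCalc_id hAh]
      have eb : funCalc (fun _ => t) A = (t : ℂ) • (1 : Matrix n n ℂ) := by
        have : (fun (_ : ℝ) => t) = (fun (x : ℝ) => t * 1) := by funext x; ring
        rw [this, funCalc_smul hAh t (fun _ => 1), funCalc_one hAh]
      rw [← ea, ← eb, funCalc_add hAh]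
    rw [e1, e2]
    abel
  set X := S * Q * S with hX
  have hXh : X.IsHermitian := by
    show Xᴴ = X
    rw [hX, Matrix.conjTranspose_mul, Matrix.conjTranspose_mul, hSh.eq, hQh.eq, Matrix.mul_assoc]
  have hX1 : X - 1 = S * (C - (p : ℂ) • A) * Sᴴ := by
    rw [hSh.eq, ← hQdiff, Matrix.mul_sub, Matrix.sub_mul, hSPS, hX]
  have hX1psd : (X - 1).PosSemidef := by
    rw [hX1]
    exact hAC.mul_mul_conjTranspose_same S
  have hXev : ∀ i, 1 ≤ hXh.eigenvalues i := by
    intro i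
    set UX := (hXh.eigenvectorUnitary : Matrix n n ℂ) with hUX
    have e1 : star UX * (X - 1) * UX = star UX * X * UX - star UX * UX := by
      rw [Matrix.mul_sub, Matrix.sub_mul, Matrix.mul_one]
    have e2 : (star UX * (X - 1) * UX) i i = ((hXh.eigenvalues i : ℂ) - 1) := by
      rw [e1, Matrix.sub_apply, hXh.star_mul_self_mul_eq_diagonal, star_mul_eigU hXh,
        Matrix.diagonal_apply_eq, Matrix.one_apply_eq]
      rfl
    have e3 := conj_entry UX (X - 1) i
    have e4 := hX1psd.dotProduct_mulVec_nonneg (fun k => UX k i)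
    rw [← e3, e2] at e4
    have e5 : (0 : ℝ) ≤ hXh.eigenvalues i - 1 := by
      have : ((0 : ℝ) : ℂ) ≤ ((hXh.eigenvalues i - 1 : ℝ) : ℂ) := by
        push_cast
        simpa using e4
      exact_mod_cast this
    linarith
  set Y := funCalc (fun x => x⁻¹) X with hY
  have hXY : X * Y = 1 := by
    conv_lhs => rw [← funCalc_id hXh]
    rw [hY, funCalc_mul hXh, ← funCalc_one hXh]
    exact funCalc_congr hXh fun i => mul_inv_cancel₀ (by linarith [hXev i])
  have h1Y : (1 : Matrix n n ℂ) - Y = funCalc (fun x => 1 - x⁻¹) X := by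
    have := funCalc_add hXh (fun x => 1 - x⁻¹) (fun x => x⁻¹)
    have h2 : funCalc (fun x => 1 - x⁻¹ + x⁻¹) X = 1 := by
      rw [← funCalc_one hXh]
      exact funCalc_congr hXh fun i => by ring
    rw [h2] at this
    rw [← this, hY]
    abel
  have h1Ypsd : ((1 : Matrix n n ℂ) - Y).PosSemidef := by
    rw [h1Y]
    exact funCalc_posSemidef hXh fun i => by
      have h1 := hXev i
      have : (hXh.eigenvalues i)⁻¹ ≤ 1 := inv_le_one_of_one_le₀ h1
      linarith
  have hQSY : Q * S * Y = T := by
    have h1 : T * (S * Q * S * Y) = T := by rw [← hX, hXY, Matrix.mul_one]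
    calc Q * S * Y = (T * S) * (Q * S * Y) := by rw [hTS, Matrix.one_mul]
    _ = T * (S * Q * S * Y) := by simp only [Matrix.mul_assoc]
    _ = T := h1
  have hSYS : S * Y * S = Q' := by
    have h1 : Q * (S * Y * S) = 1 := by
      calc Q * (S * Y * S) = (Q * S * Y) * S := by simp only [Matrix.mul_assoc]
      _ = T * S := by rw [hQSY]
      _ = 1 := hTS
    calc S * Y * S = (Q' * Q) * (S * Y * S) := by rw [hQ'Q, Matrix.one_mul]
    _ = Q' * (Q * (S * Y * S)) := by simp only [Matrix.mul_assoc]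
    _ = Q' := by rw [h1, Matrix.mul_one]
  have hfinal : P' - Q' = S * ((1 : Matrix n n ℂ) - Y) * Sᴴ := by
    rw [hSh.eq, Matrix.mul_sub, Matrix.sub_mul, Matrix.mul_one, hSS, hSYS]
  rw [show funCalc (fun x => (p * x + t)⁻¹) A - funCalc (fun x => (x + t)⁻¹) C = P' - Q' from rfl,
    hfinal]
  exact h1Ypsd.mul_mul_conjTranspose_same S

open MeasureTheory

noncomputable def rker (β μ t : ℝ) : ℝ := t ^ (β - 1) * (μ / (μ + t))

lemma rker_contOn {β μ : ℝ} (hμ : 0 ≤ μ) : ContinuousOn (rker β μ) (Set.Ioi 0) := by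
  apply ContinuousOn.mul
  · exact continuousOn_id.rpow_const fun x hx => Or.inl (ne_of_gt hx)
  · exact ContinuousOn.div continuousOn_const (continuousOn_const.add continuousOn_id)
      fun x hx => ne_of_gt (add_pos_of_nonneg_of_pos hμ hx)

lemma rker_nonneg {β μ : ℝ} (hμ : 0 ≤ μ) {t : ℝ} (ht : 0 < t) : 0 ≤ rker β μ t :=
  mul_nonneg (Real.rpow_nonneg ht.le _) (div_nonneg hμ (by positivity))

lemma rker_integrable {β : ℝ} (hβ0 : 0 < β) (hβ1 : β < 1) {μ : ℝ} (hμ : 0 ≤ μ) :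
    IntegrableOn (rker β μ) (Set.Ioi 0) := by
  rw [← Set.Ioc_union_Ioi_eq_Ioi (zero_le_one : (0:ℝ) ≤ 1)]
  apply IntegrableOn.union
  · have hint : IntegrableOn (fun t : ℝ => t ^ (β - 1)) (Set.Ioc 0 1) := by
      rw [← intervalIntegrable_iff_integrableOn_Ioc_of_le zero_le_one]
      exact intervalIntegral.intervalIntegrable_rpow' (by linarith)
    apply Integrable.mono' hint
      (((rker_contOn hμ).mono Set.Ioc_subset_Ioi_self).aestronglyMeasurable measurableSet_Ioc)
    filter_upwards [ae_restrict_mem measurableSet_Ioc] with t ht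
    rw [Real.norm_eq_abs, abs_of_nonneg (rker_nonneg hμ ht.1)]
    calc rker β μ t ≤ t ^ (β - 1) * 1 := by
          apply mul_le_mul_of_nonneg_left _ (Real.rpow_nonneg ht.1.le _)
          exact div_le_one_of_le₀ (le_add_of_nonneg_right ht.1.le) (add_pos_of_nonneg_of_pos hμ ht.1).le
      _ = t ^ (β - 1) := mul_one _
  · have hint : IntegrableOn (fun t : ℝ => μ * t ^ (β - 2)) (Set.Ioi 1) :=
      (integrableOn_Ioi_rpow_of_lt (by linarith) one_pos).const_mul μ
    apply Integrable.mono' hint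
      (((rker_contOn hμ).mono (Set.Ioi_subset_Ioi zero_le_one)).aestronglyMeasurable measurableSet_Ioi)
    filter_upwards [ae_restrict_mem measurableSet_Ioi] with t ht
    have ht0 : (0:ℝ) < t := lt_trans one_pos ht
    rw [Real.norm_eq_abs, abs_of_nonneg (rker_nonneg hμ ht0)]
    have h1 : μ / (μ + t) ≤ μ / t := by
      rw [div_le_div_iff₀ (add_pos_of_nonneg_of_pos hμ ht0) ht0]
      nlinarith [mul_nonneg hμ hμ]
    calc rker β μ t ≤ t ^ (β - 1) * (μ / t) :=
          mul_le_mul_of_nonneg_left h1 (Real.rpow_nonneg ht0.le _)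
      _ = μ * (t ^ (β - 1) / t ^ (1:ℝ)) := by rw [Real.rpow_one]; ring
      _ = μ * t ^ (β - 2) := by
          rw [← Real.rpow_sub ht0, show β - 1 - 1 = β - 2 by ring]

lemma rker_integral {β : ℝ} (hβ0 : 0 < β) (hβ1 : β < 1) {μ : ℝ} (hμ : 0 ≤ μ) :
    ∫ t in Set.Ioi (0:ℝ), rker β μ t = μ ^ β * ∫ t in Set.Ioi (0:ℝ), rker β 1 t := by
  rcases eq_or_lt_of_le hμ with h0 | h0
  · rw [← h0]
    have : ∀ t : ℝ, rker β 0 t = 0 := fun t => by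
      unfold rker; rw [zero_div, mul_zero]
    simp only [this, integral_zero, Real.zero_rpow hβ0.ne', zero_mul]
  · have key := MeasureTheory.integral_comp_mul_left_Ioi (rker β μ) 0 h0
    rw [mul_zero] at key
    have heq : Set.EqOn (fun x => rker β μ (μ * x)) (fun x => μ ^ (β-1) * rker β 1 x)
        (Set.Ioi (0:ℝ)) := by
      intro x hx
      simp only [rker]
      rw [Real.mul_rpow h0.le (le_of_lt hx)]
      have hx0 : (0:ℝ) < x := hx
      have h1x : (0:ℝ) < 1 + x := by linarith
      have h2 : μ / (μ + μ * x) = 1 / (1 + x) := by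
        rw [show μ + μ * x = μ * (1 + x) by ring]
        field_simp
      rw [h2]
      ring
    rw [setIntegral_congr_fun measurableSet_Ioi heq, MeasureTheory.integral_const_mul] at key
    have hc : (∫ t in Set.Ioi (0:ℝ), rker β μ t) = μ * (μ ^ (β-1) * ∫ t in Set.Ioi (0:ℝ), rker β 1 t) := by
      rw [key, smul_eq_mul, ← mul_assoc, mul_inv_cancel₀ h0.ne', one_mul]
    rw [hc, ← mul_assoc, ← Real.rpow_one_add' h0.le (by intro h; linarith), show (1:ℝ) + (β-1) = β by ring]

lemma rker_one_pos {β : ℝ} (hβ0 : 0 < β) (hβ1 : β < 1) :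
    0 < ∫ t in Set.Ioi (0:ℝ), rker β 1 t := by
  rw [setIntegral_pos_iff_support_of_nonneg_ae ?pos ?int]
  case pos =>
    filter_upwards [ae_restrict_mem measurableSet_Ioi] with t ht
    exact rker_nonneg zero_le_one ht
  case int => exact rker_integrable hβ0 hβ1 zero_le_one
  have hsub : Set.Ioi (0:ℝ) ⊆ Function.support (rker β 1) ∩ Set.Ioi 0 := by
    intro t ht
    refine ⟨?_, ht⟩
    have ht' : (0:ℝ) < t := ht
    have : 0 < rker β 1 t :=
      mul_pos (Real.rpow_pos_of_pos ht' _) (div_pos one_pos (by linarith))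
    exact this.ne'
  calc (0:ENNReal) < volume (Set.Ioi (0:ℝ)) := by rw [Real.volume_Ioi]; exact ENNReal.zero_lt_top
    _ ≤ volume (Function.support (rker β 1) ∩ Set.Ioi 0) := measure_mono hsub


open MeasureTheory in
lemma lh_qform {A C : Matrix n n ℂ} (hA : A.PosSemidef) (hC : C.PosSemidef)
    {p : ℝ} (hp : 0 ≤ p) (hAC : (C - (p : ℂ) • A).PosSemidef)
    {β : ℝ} (hβ0 : 0 < β) (hβ1 : β < 1) (v : n → ℂ) :
    p ^ β * ∑ i, (hA.1.eigenvalues i) ^ β *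
        Complex.normSq ((star (hA.1.eigenvectorUnitary : Matrix n n ℂ)).mulVec v i)
      ≤ ∑ j, (hC.1.eigenvalues j) ^ β *
        Complex.normSq ((star (hC.1.eigenvectorUnitary : Matrix n n ℂ)).mulVec v j) := by
  set wA : n → ℝ := fun i => Complex.normSq ((star (hA.1.eigenvectorUnitary : Matrix n n ℂ)).mulVec v i) with hwA
  set wC : n → ℝ := fun j => Complex.normSq ((star (hC.1.eigenvectorUnitary : Matrix n n ℂ)).mulVec v j) with hwC
  set lam : n → ℝ := fun i => hA.1.eigenvalues i with hlam
  set mu : n → ℝ := fun j => hC.1.eigenvalues j with hmu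
  have hlam0 : ∀ i, 0 ≤ lam i := fun i => hA.eigenvalues_nonneg i
  have hmu0 : ∀ j, 0 ≤ mu j := fun j => hC.eigenvalues_nonneg j
  have hwA0 : ∀ i, 0 ≤ wA i := fun i => Complex.normSq_nonneg _
  have hwC0 : ∀ j, 0 ≤ wC j := fun j => Complex.normSq_nonneg _
  set c := ∫ t in Set.Ioi (0:ℝ), rker β 1 t with hc
  have hcpos : 0 < c := rker_one_pos hβ0 hβ1
  -- weights have equal total mass
  have hmass : ∑ i, wA i = ∑ j, wC j := by
    rw [hwA, hwC, sum_normSq_w hA.1 v, sum_normSq_w hC.1 v]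
  -- pointwise resolvent comparison
  have hpoint : ∀ t ∈ Set.Ioi (0:ℝ),
      ∑ i, wA i * rker β (p * lam i) t ≤ ∑ j, wC j * rker β (mu j) t := by
    intro t ht
    have ht0 : (0:ℝ) < t := ht
    have hres := resolvent_psd hA hC hp ht0 hAC
    have hq1 := qform hA.1 (fun x => (p * x + t)⁻¹) v
    have hq2 := qform hC.1 (fun x => (x + t)⁻¹) v
    have hsub := hres.dotProduct_mulVec_nonneg v
    rw [Matrix.sub_mulVec, dotProduct_sub, hq1, hq2] at hsub
    have hkey : (∑ j, (mu j + t)⁻¹ * wC j) ≤ ∑ i, (p * lam i + t)⁻¹ * wA i := by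
      have : ((0:ℝ) : ℂ) ≤ (((∑ i, (p * lam i + t)⁻¹ * wA i) - ∑ j, (mu j + t)⁻¹ * wC j : ℝ) : ℂ) := by
        push_cast
        simpa using hsub
      have := (Complex.real_le_real).mp this
      linarith
    -- rewrite fractions
    have hfracA : ∀ i, wA i * rker β (p * lam i) t
        = t ^ (β - 1) * (wA i - t * ((p * lam i + t)⁻¹ * wA i)) := by
      intro i
      have hd : 0 < p * lam i + t := add_pos_of_nonneg_of_pos (mul_nonneg hp (hlam0 i)) ht0
      unfold rker
      have : p * lam i / (p * lam i + t) = 1 - t * (p * lam i + t)⁻¹ := by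
        field_simp
        ring
      rw [this]
      ring
    have hfracC : ∀ j, wC j * rker β (mu j) t
        = t ^ (β - 1) * (wC j - t * ((mu j + t)⁻¹ * wC j)) := by
      intro j
      have hd : 0 < mu j + t := add_pos_of_nonneg_of_pos (hmu0 j) ht0
      unfold rker
      have : mu j / (mu j + t) = 1 - t * (mu j + t)⁻¹ := by
        field_simp
        ring
      rw [this]
      ring
    rw [Finset.sum_congr rfl fun i _ => hfracA i, Finset.sum_congr rfl fun j _ => hfracC j,
      ← Finset.mul_sum, ← Finset.mul_sum]
    apply mul_le_mul_of_nonneg_left _ (Real.rpow_nonneg ht0.le _)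
    rw [Finset.sum_sub_distrib, Finset.sum_sub_distrib, ← Finset.mul_sum, ← Finset.mul_sum, hmass]
    have := mul_le_mul_of_nonneg_left hkey ht0.le
    linarith
  -- integrate
  have hintA : ∀ i, IntegrableOn (fun t => wA i * rker β (p * lam i) t) (Set.Ioi (0:ℝ)) :=
    fun i => (rker_integrable hβ0 hβ1 (mul_nonneg hp (hlam0 i))).const_mul (wA i)
  have hintC : ∀ j, IntegrableOn (fun t => wC j * rker β (mu j) t) (Set.Ioi (0:ℝ)) :=
    fun j => (rker_integrable hβ0 hβ1 (hmu0 j)).const_mul (wC j)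
  have hsumA : IntegrableOn (fun t => ∑ i, wA i * rker β (p * lam i) t) (Set.Ioi (0:ℝ)) := by
    apply integrable_finset_sum
    intro i _
    exact hintA i
  have hsumC : IntegrableOn (fun t => ∑ j, wC j * rker β (mu j) t) (Set.Ioi (0:ℝ)) := by
    apply integrable_finset_sum
    intro j _
    exact hintC j
  have hle := setIntegral_mono_on hsumA hsumC measurableSet_Ioi hpoint
  rw [integral_finset_sum _ (fun i _ => hintA i), integral_finset_sum _ (fun j _ => hintC j)] at hle
  simp only [MeasureTheory.integral_const_mul] at hle
  have hvalA : ∀ i, ∫ t in Set.Ioi (0:ℝ), rker β (p * lam i) t = (p * lam i) ^ β * c :=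
    fun i => rker_integral hβ0 hβ1 (mul_nonneg hp (hlam0 i))
  have hvalC : ∀ j, ∫ t in Set.Ioi (0:ℝ), rker β (mu j) t = (mu j) ^ β * c :=
    fun j => rker_integral hβ0 hβ1 (hmu0 j)
  simp only [hvalA, hvalC] at hle
  -- divide by c
  have h2 : (∑ i, (p * lam i) ^ β * wA i) * c ≤ (∑ j, (mu j) ^ β * wC j) * c := by
    rw [Finset.sum_mul, Finset.sum_mul]
    calc (∑ i, (p * lam i) ^ β * wA i * c) = ∑ i, wA i * ((p * lam i) ^ β * c) := by
          exact Finset.sum_congr rfl fun i _ => by ring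
      _ ≤ ∑ j, wC j * ((mu j) ^ β * c) := hle
      _ = ∑ j, (mu j) ^ β * wC j * c := Finset.sum_congr rfl fun j _ => by ring
  have h3 := (mul_le_mul_iff_left₀ hcpos).mp h2
  calc p ^ β * ∑ i, lam i ^ β * wA i = ∑ i, (p * lam i) ^ β * wA i := by
        rw [Finset.mul_sum]
        exact Finset.sum_congr rfl fun i _ => by
          rw [Real.mul_rpow hp (hlam0 i)]; ring
    _ ≤ ∑ j, (mu j) ^ β * wC j := h3

lemma key_trace {A C : Matrix n n ℂ} (hA : A.PosSemidef) (hC : C.PosSemidef)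
    {p : ℝ} (hp : 0 ≤ p) (hAC : (C - (p : ℂ) • A).PosSemidef)
    {β : ℝ} (hβ0 : 0 < β) :
    p ^ β * (funCalc (fun x => x ^ (β + 1)) A).trace.re
      ≤ (A * funCalc (fun x => x ^ β) C).trace.re := by
  set UA := (hA.1.eigenvectorUnitary : Matrix n n ℂ) with hUA
  set lam : n → ℝ := fun i => hA.1.eigenvalues i with hlamdef
  have hlam0 : ∀ i, 0 ≤ lam i := fun i => hA.eigenvalues_nonneg i
  set M := funCalc (fun x => x ^ β) C with hM
  set qC : n → ℝ := fun i => ∑ j, (hC.1.eigenvalues j) ^ β *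
      Complex.normSq ((star (hC.1.eigenvectorUnitary : Matrix n n ℂ)).mulVec (fun k => UA k i) j)
    with hqCdef
  have htr : (A * M).trace = ((∑ i, lam i * qC i : ℝ) : ℂ) := by
    rw [trace_mul_eq A hA.1 M]
    push_cast
    exact Finset.sum_congr rfl fun i _ => by rw [hM, qform hC.1]
  have hLHS : (funCalc (fun x => x ^ (β + 1)) A).trace = ((∑ i, lam i ^ (β + 1) : ℝ) : ℂ) :=
    funCalc_trace hA.1 _
  have claim : ∀ i, (p * lam i) ^ β ≤ qC i := by
    intro i
    rcases le_or_gt 1 β with hb1 | hb1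
    · set w : n → ℝ := fun j =>
        Complex.normSq ((star (hC.1.eigenvectorUnitary : Matrix n n ℂ)).mulVec (fun k => UA k i) j)
        with hwdef
      have hw1 : ∑ j, w j = 1 := by
        rw [hwdef, sum_normSq_w hC.1]
        have h := col_unit hA.1 i
        rw [star_dot_self] at h
        exact_mod_cast h
      have hmean : p * lam i ≤ ∑ j, hC.1.eigenvalues j * w j := by
        have hsub := hAC.dotProduct_mulVec_nonneg (fun k => UA k i)
        rw [Matrix.sub_mulVec, dotProduct_sub, Matrix.smul_mulVec,
          dotProduct_smul] at hsub
        have hCc : dotProduct (star (fun k => UA k i)) (C.mulVec (fun k => UA k i))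
            = ((∑ j, hC.1.eigenvalues j * w j : ℝ) : ℂ) := by
          have h := qform hC.1 (fun x => x) (fun k => UA k i)
          rw [funCalc_id hC.1] at h
          exact h
        rw [hCc, eig_entry hA.1 i] at hsub
        have h2 : ((0:ℝ):ℂ) ≤ (((∑ j, hC.1.eigenvalues j * w j) - p * lam i : ℝ) : ℂ) := by
          push_cast
          rw [smul_eq_mul] at hsub
          simpa using hsub
        have h3 := Complex.real_le_real.mp h2
        linarith
      calc (p * lam i) ^ β ≤ (∑ j, hC.1.eigenvalues j * w j) ^ β :=
            Real.rpow_le_rpow (mul_nonneg hp (hlam0 i)) hmean hβ0.le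
        _ = (∑ j, w j * hC.1.eigenvalues j) ^ β := by
            rw [Finset.sum_congr rfl fun j _ => mul_comm (hC.1.eigenvalues j) (w j)]
        _ ≤ ∑ j, w j * (hC.1.eigenvalues j) ^ β :=
            Real.rpow_arith_mean_le_arith_mean_rpow Finset.univ w _
              (fun j _ => Complex.normSq_nonneg _) hw1
              (fun j _ => hC.eigenvalues_nonneg j) hb1
        _ = qC i := by
            rw [hqCdef]
            exact Finset.sum_congr rfl fun j _ => mul_comm _ _
    · have hlh := lh_qform hA hC hp hAC hβ0 hb1 (fun k => UA k i)
      have hself : (star UA).mulVec (fun k => UA k i) = fun k => (1 : Matrix n n ℂ) k i := by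
        funext k
        have h1 : ((star UA).mulVec (fun l => UA l i)) k = (star UA * UA) k i := by
          rw [Matrix.mul_apply, Matrix.mulVec, dotProduct]
        rw [h1, star_mul_eigU hA.1]
      have hsum : ∑ j, (hA.1.eigenvalues j) ^ β *
          Complex.normSq (((star UA).mulVec (fun k => UA k i)) j) = lam i ^ β := by
        rw [hself]
        rw [Finset.sum_eq_single i (fun b _ hb => by
          simp [Matrix.one_apply, hb]) (by simp)]
        simp [Matrix.one_apply]
        rfl
      rw [hsum] at hlh
      calc (p * lam i) ^ β = p ^ β * lam i ^ β := Real.mul_rpow hp (hlam0 i)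
        _ ≤ qC i := hlh
  have hmono : ∑ i, p ^ β * lam i ^ (β + 1) ≤ ∑ i, lam i * qC i := by
    apply Finset.sum_le_sum
    intro i _
    have h1 : p ^ β * lam i ^ (β + 1) = lam i * (p * lam i) ^ β := by
      rcases eq_or_lt_of_le (hlam0 i) with h0 | h0
      · rw [← h0]
        rw [Real.zero_rpow (by linarith : β + 1 ≠ 0)]
        simp
      · rw [Real.mul_rpow hp h0.le, show β + 1 = 1 + β by ring, Real.rpow_add h0, Real.rpow_one]
        ring
    rw [h1]
    exact mul_le_mul_of_nonneg_left (claim i) (hlam0 i)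
  rw [htr, hLHS, Complex.ofReal_re, Complex.ofReal_re, Finset.mul_sum]
  exact hmono

lemma psd_smul {ρ : Matrix n n ℂ} (h : ρ.PosSemidef) {p : ℝ} (hp : 0 ≤ p) :
    ((p : ℂ) • ρ).PosSemidef := by
  constructor
  · show ((p : ℂ) • ρ)ᴴ = _
    rw [Matrix.conjTranspose_smul, h.1.eq, Complex.star_def, Complex.conj_ofReal]
  · exact (h.smul (a := (p : ℂ)) (by exact_mod_cast hp)).2

lemma psd_sum {ι : Type*} (s : Finset ι) (f : ι → Matrix n n ℂ)
    (h : ∀ i ∈ s, (f i).PosSemidef) : (∑ i ∈ s, f i).PosSemidef :=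
  Finset.sum_induction f _ (fun _ _ ha hb => ha.add hb) Matrix.PosSemidef.zero h

theorem main_ineq {m : ℕ}
    (ρ : Fin m → Matrix n n ℂ) (hρ : ∀ x, (ρ x).PosSemidef)
    (p : Fin m → ℝ) (hp : ∀ x, 0 ≤ p x)
    (α : ℝ) (hα : 1 < α) :
    ∑ x, p x * ((funCalc (fun t => t ^ α) (ρ x)).trace.re) ^ (1 / α)
      ≤ (m : ℝ) ^ ((α - 1) / α) *
        ((funCalc (fun t => t ^ α) (∑ x, (p x : ℂ) • ρ x)).trace.re) ^ (1 / α) := by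
  have hα0 : (0:ℝ) < α := by linarith
  by_cases hm : m = 0
  · subst hm
    simp only [Finset.univ_eq_empty, Finset.sum_empty, Nat.cast_zero]
    rw [Real.zero_rpow (div_ne_zero (by linarith) (by linarith) : (α - 1)/α ≠ 0), zero_mul]
  set σ := ∑ x, (p x : ℂ) • ρ x with hσdef
  have hσ : σ.PosSemidef := psd_sum _ _ fun x _ => psd_smul (hρ x) (hp x)
  have hσx : ∀ x, (σ - (p x : ℂ) • ρ x).PosSemidef := by
    intro x
    have he : σ - (p x : ℂ) • ρ x = ∑ y ∈ Finset.univ.erase x, (p y : ℂ) • ρ y := by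
      rw [hσdef, ← Finset.sum_erase_add Finset.univ _ (Finset.mem_univ x), add_sub_cancel_right]
    rw [he]
    exact psd_sum _ _ fun y _ => psd_smul (hρ y) (hp y)
  set β := α - 1 with hβdef
  have hβ0 : 0 < β := by rw [hβdef]; linarith
  set T : Fin m → ℝ := fun x => (funCalc (fun t => t ^ α) (ρ x)).trace.re with hT
  have hT0 : ∀ x, 0 ≤ T x := by
    intro x
    have hTx : T x = (funCalc (fun t => t ^ α) (ρ x)).trace.re := rfl
    rw [hTx, funCalc_trace (hρ x).1, Complex.ofReal_re]
    exact Finset.sum_nonneg fun i _ => Real.rpow_nonneg ((hρ x).eigenvalues_nonneg i) α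
  set S := (funCalc (fun t => t ^ α) σ).trace.re with hS
  have hS0 : 0 ≤ S := by
    rw [hS, funCalc_trace hσ.1, Complex.ofReal_re]
    exact Finset.sum_nonneg fun i _ => Real.rpow_nonneg (hσ.eigenvalues_nonneg i) α
  have hSid : funCalc (fun t => t ^ α) σ = σ * funCalc (fun t => t ^ β) σ := by
    conv_rhs => rw [show σ * funCalc (fun t => t ^ β) σ
      = funCalc (fun t => t) σ * funCalc (fun t => t ^ β) σ from by rw [funCalc_id hσ.1]]
    rw [funCalc_mul hσ.1]
    apply funCalc_congr hσ.1
    intro i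
    rcases eq_or_lt_of_le (hσ.eigenvalues_nonneg i) with h0 | h0
    · rw [← h0, Real.zero_rpow (by linarith : α ≠ 0), Real.zero_rpow hβ0.ne', mul_zero]
    · rw [show α = 1 + β by rw [hβdef]; ring, Real.rpow_add h0, Real.rpow_one]
  have hstep : ∑ x, p x ^ α * T x ≤ S := by
    have h1 : (σ * funCalc (fun t => t ^ β) σ).trace
        = ∑ x, (p x : ℂ) * (ρ x * funCalc (fun t => t ^ β) σ).trace := by
      rw [hσdef, Matrix.sum_mul, Matrix.trace_sum]
      exact Finset.sum_congr rfl fun x _ => by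
        rw [Matrix.smul_mul, Matrix.trace_smul, smul_eq_mul]
    have h2 : S = ∑ x, p x * (ρ x * funCalc (fun t => t ^ β) σ).trace.re := by
      rw [hS, hSid, h1, Complex.re_sum]
      exact Finset.sum_congr rfl fun x _ => by
        simp [Complex.mul_re, Complex.ofReal_re, Complex.ofReal_im]
    rw [h2]
    apply Finset.sum_le_sum
    intro x _
    have hkt := key_trace (hρ x) hσ (hp x) (hσx x) hβ0
    rw [show β + 1 = α by rw [hβdef]; ring] at hkt
    have e : p x ^ α * T x = p x * (p x ^ β * T x) := by
      rcases eq_or_lt_of_le (hp x) with h0 | h0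
      · rw [← h0, Real.zero_rpow (by linarith : α ≠ 0), Real.zero_rpow hβ0.ne']
        ring
      · rw [show α = 1 + β by rw [hβdef]; ring, Real.rpow_add h0, Real.rpow_one]
        ring
    rw [e]
    exact mul_le_mul_of_nonneg_left hkt (hp x)
  -- Hoelder / power mean step
  have hm0 : (0:ℝ) < (m : ℝ) := by exact_mod_cast Nat.pos_of_ne_zero hm
  set a : Fin m → ℝ := fun x => p x * (T x) ^ (1/α) with ha
  have ha0 : ∀ x, 0 ≤ a x := fun x => mul_nonneg (hp x) (Real.rpow_nonneg (hT0 x) _)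
  have hsa0 : 0 ≤ ∑ x, a x := Finset.sum_nonneg fun x _ => ha0 x
  have haα : ∀ x, a x ^ α = p x ^ α * T x := by
    intro x
    rw [ha, Real.mul_rpow (hp x) (Real.rpow_nonneg (hT0 x) _), ← Real.rpow_mul (hT0 x),
      one_div, inv_mul_cancel₀ (by linarith : α ≠ 0), Real.rpow_one]
  have hpm : (∑ x, a x) ^ α ≤ (m:ℝ) ^ (α - 1) * ∑ x, a x ^ α := by
    have hjen := Real.rpow_arith_mean_le_arith_mean_rpow Finset.univ (fun _ => 1/(m:ℝ)) a
      (fun i _ => by positivity) (by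
        rw [Finset.sum_const, Finset.card_univ, Fintype.card_fin, nsmul_eq_mul]
        field_simp) (fun i _ => ha0 i) hα.le
    rw [← Finset.mul_sum, Real.mul_rpow (by positivity) hsa0, ← Finset.mul_sum] at hjen
    have h3 : (∑ x, a x) ^ α ≤ (m:ℝ) ^ α * ((1/(m:ℝ)) * ∑ x, a x ^ α) := by
      calc (∑ x, a x) ^ α
          = (m:ℝ) ^ α * (((1:ℝ)/(m:ℝ)) ^ α * (∑ x, a x) ^ α) := by
            rw [← mul_assoc, ← Real.mul_rpow hm0.le (by positivity), mul_one_div,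
              div_self hm0.ne', Real.one_rpow, one_mul]
        _ ≤ (m:ℝ) ^ α * ((1/(m:ℝ)) * ∑ x, a x ^ α) :=
            mul_le_mul_of_nonneg_left hjen (Real.rpow_nonneg hm0.le α)
    calc (∑ x, a x) ^ α ≤ (m:ℝ) ^ α * ((1/(m:ℝ)) * ∑ x, a x ^ α) := h3
      _ = (m:ℝ) ^ (α - 1) * ∑ x, a x ^ α := by
          rw [Real.rpow_sub hm0, Real.rpow_one]
          field_simp
  have hfin : (∑ x, a x) ^ α ≤ (m:ℝ) ^ (α - 1) * S := by
    refine le_trans hpm (mul_le_mul_of_nonneg_left ?_ (Real.rpow_nonneg hm0.le _))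
    rw [Finset.sum_congr rfl fun x _ => haα x]
    exact hstep
  have hroot := Real.rpow_le_rpow (Real.rpow_nonneg hsa0 α) hfin (by positivity : (0:ℝ) ≤ 1/α)
  rw [← Real.rpow_mul hsa0, mul_one_div, div_self (by linarith : α ≠ 0), Real.rpow_one] at hroot
  rw [Real.mul_rpow (Real.rpow_nonneg hm0.le _) hS0, ← Real.rpow_mul hm0.le, mul_one_div] at hroot
  exact hroot

end McAux

theorem sum_trace_rpow_le {n : Type*} [Fintype n] [DecidableEq n] {m : ℕ}
    (ρ : Fin m → Matrix n n ℂ) (hρ : ∀ x, IsDensity (ρ x))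
    (p : Fin m → ℝ) (hp : ∀ x, 0 ≤ p x) (hp1 : ∑ x, p x = 1)
    (α : ℝ) (hα : 1 < α) :
    ∑ x, p x * ((mpow (ρ x) α).trace.re) ^ (1 / α)
      ≤ (m : ℝ) ^ ((α - 1) / α) * ((mpow (∑ x, (p x : ℂ) • ρ x) α).trace.re) ^ (1 / α) :=
  McAux.main_ineq ρ (fun x => (hρ x).1) p hp α hα
end

section
/- For a cq state ρ^{RX} = Σ_x p_x ρ_x ⊗ |x⟩⟨x| with the |x⟩ an orthonormal basis of an m-dimensional space, and α ∈ (1,2], the Rényi entropy satisfies log m ≥ S_α(RX)_ρ − S_α(R)_ρ ≥ 0, where S_α(τ) = (1/(1−α)) log Tr(τ^α), S_α(R)_ρ uses the reduced state Σ_x p_x ρ_x, and S_α(RX)_ρ = (1/(1−α)) log Σ_x p_x^α Tr(ρ_x^α). -/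
open Matrix BigOperators Kronecker ComplexOrder

section RenyiHelpers

open Finset

variable {n : Type*} [Fintype n] [DecidableEq n]

set_option linter.unusedSectionVars false
set_option linter.unusedVariables false

private lemma trace_funCalc (f : ℝ → ℝ) {A : Matrix n n ℂ} (hA : A.IsHermitian) :
    (funCalc f A).trace = ∑ i, (f (hA.eigenvalues i) : ℂ) := by
  rw [funCalc, dif_pos hA, Matrix.trace_mul_cycle,
    (Matrix.mem_unitaryGroup_iff').mp (hA.eigenvectorUnitary).2, Matrix.one_mul,
    Matrix.trace_diagonal]

private lemma trace_mpow_re {A : Matrix n n ℂ} (hA : A.IsHermitian) (c : ℝ) :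
    (mpow A c).trace.re = ∑ i, hA.eigenvalues i ^ c := by
  rw [mpow, trace_funCalc _ hA, Complex.re_sum]
  simp

private lemma trace_eq_sum_eigenvalues {A : Matrix n n ℂ} (hA : A.IsHermitian) :
    A.trace = ∑ i, (hA.eigenvalues i : ℂ) := by
  conv_lhs => rw [hA.spectral_theorem, Unitary.conjStarAlgAut_apply]
  rw [Matrix.trace_mul_cycle,
    (Matrix.mem_unitaryGroup_iff').mp (hA.eigenvectorUnitary).2, Matrix.one_mul,
    Matrix.trace_diagonal]
  rfl

private lemma conj_diag_entry (B : Matrix n n ℂ) (d : n → ℂ) (i k : n) :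
    (B * Matrix.diagonal d * star B) i k = ∑ j, d j * (B i j * star (B k j)) := by
  rw [Matrix.mul_apply]
  refine Finset.sum_congr rfl fun j _ => ?_
  rw [Matrix.mul_diagonal, Matrix.star_apply]
  ring

private lemma posSemidef_outer (v : n → ℂ) : (outer v).PosSemidef := by
  rw [Matrix.posSemidef_iff_dotProduct_mulVec]
  constructor
  · ext i j
    simp [outer, Matrix.conjTranspose_apply, mul_comm]
  · intro y
    have : dotProduct (star y) (outer v *ᵥ y)
        = star (dotProduct (star v) y) * (dotProduct (star v) y) := by
      simp only [dotProduct, Matrix.mulVec, outer, Matrix.of_apply, Pi.star_apply,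
        Finset.mul_sum, Finset.sum_mul, star_sum, star_mul', star_star]
      rw [Finset.sum_comm]
      congr 1; ext i; congr 1; ext k; ring
    rw [this]
    exact star_mul_self_nonneg _

private lemma posSemidef_sum {ι : Type*} (s : Finset ι) (f : ι → Matrix n n ℂ)
    (h : ∀ z ∈ s, (f z).PosSemidef) : (∑ z ∈ s, f z).PosSemidef := by
  classical
  induction s using Finset.induction_on with
  | empty => simpa using ⟨by simp [Matrix.IsHermitian, Matrix.conjTranspose_zero], by simp⟩
  | insert a t hz ih =>
      rw [Finset.sum_insert hz]
      exact Matrix.PosSemidef.add (h a (by simp)) (ih fun z hzt => h z (by simp [hzt]))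

private lemma smul_outer_eq (c : ℝ) (hc : 0 ≤ c) (v : n → ℂ) :
    (c : ℂ) • outer v = outer (fun i => (Real.sqrt c : ℂ) * v i) := by
  ext i j
  simp only [outer, Matrix.smul_apply, Matrix.of_apply, smul_eq_mul, star_mul',
    Complex.star_def, Complex.conj_ofReal]
  have h : (Real.sqrt c : ℂ) * (Real.sqrt c : ℂ) = (c : ℂ) := by
    norm_cast
    exact Real.mul_self_sqrt hc
  calc (c:ℂ) * (v i * (starRingEnd ℂ) (v j))
      = ((Real.sqrt c : ℂ) * (Real.sqrt c : ℂ)) * (v i * (starRingEnd ℂ) (v j)) := by rw [h]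
    _ = (Real.sqrt c : ℂ) * v i * ((Real.sqrt c:ℂ) * (starRingEnd ℂ) (v j)) := by ring

private lemma outer_conj (B : Matrix n n ℂ) (v : n → ℂ) :
    star B * outer v * B = outer ((star B) *ᵥ v) := by
  ext i k
  simp only [Matrix.mul_apply, outer, Matrix.of_apply, Matrix.mulVec, dotProduct,
    Matrix.star_apply, Pi.star_apply, Complex.star_def, map_sum, star_mul',
    Finset.sum_mul, Finset.mul_sum]
  refine Finset.sum_congr rfl fun b _ => Finset.sum_congr rfl fun c _ => ?_
  simp [Matrix.conjTranspose_apply, Complex.star_def]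
  ring

private lemma jensen_rpow {α : ℝ} (hα : 1 ≤ α) (w r : n → ℝ) (hw : ∀ i, 0 ≤ w i)
    (hr : ∀ i, 0 ≤ r i) (hw1 : ∑ i, w i = 1) :
    (∑ i, w i * r i) ^ α ≤ ∑ i, w i * r i ^ α := by
  have h := Real.inner_le_weight_mul_Lp_of_nonneg Finset.univ hα w r hw hr
  rw [hw1, Real.one_rpow, one_mul] at h
  have hnn : 0 ≤ ∑ i, w i * r i ^ α :=
    Finset.sum_nonneg fun i _ => mul_nonneg (hw i) (Real.rpow_nonneg (hr i) α)
  have hα0 : α ≠ 0 := by linarith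
  calc (∑ i, w i * r i) ^ α ≤ ((∑ i, w i * r i ^ α) ^ α⁻¹) ^ α := by
        apply Real.rpow_le_rpow (Finset.sum_nonneg fun i _ => mul_nonneg (hw i) (hr i)) h
        linarith
    _ = ∑ i, w i * r i ^ α := Real.rpow_inv_rpow hnn hα0

private lemma rankOneBound {lam : n → ℝ} {s : n → ℂ} {a β : ℝ}
    (hlam : ∀ i, 0 ≤ lam i) (ha : 0 ≤ a) (hβ0 : 0 < β) (hβ1 : β ≤ 1)
    (hnorm : ∑ i, Complex.normSq (s i) = 1)
    (hker : ∀ i, lam i = 0 → a * Complex.normSq (s i) = 0)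
    (hquad : a * (∑ i ∈ univ.filter (fun i => lam i ≠ 0), Complex.normSq (s i) / lam i) ^ 2
      ≤ ∑ i ∈ univ.filter (fun i => lam i ≠ 0), Complex.normSq (s i) / lam i) :
    a ^ β ≤ ∑ i, Complex.normSq (s i) * lam i ^ β := by
  classical
  have hX0 : 0 ≤ ∑ i, Complex.normSq (s i) * lam i ^ β :=
    Finset.sum_nonneg fun i _ => mul_nonneg (Complex.normSq_nonneg _)
      (Real.rpow_nonneg (hlam i) β)
  rcases eq_or_lt_of_le ha with h0 | hapos
  · rw [← h0, Real.zero_rpow hβ0.ne']; exact hX0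
  set F : Finset n := univ.filter (fun i => lam i ≠ 0) with hF
  set S : ℝ := ∑ i ∈ F, Complex.normSq (s i) / lam i with hSdef
  -- on the complement of F, s i = 0
  have hzero : ∀ i, lam i = 0 → Complex.normSq (s i) = 0 := by
    intro i hi
    rcases mul_eq_zero.mp (hker i hi) with h | h
    · exact absurd h hapos.ne'
    · exact h
  have htF : ∑ i ∈ F, Complex.normSq (s i) = 1 := by
    rw [← hnorm]
    apply Finset.sum_subset (Finset.subset_univ F)
    intro i _ hiF
    apply hzero
    by_contra hne
    exact hiF (Finset.mem_filter.mpr ⟨Finset.mem_univ i, hne⟩)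
  have hSnonneg : ∀ i ∈ F, 0 ≤ Complex.normSq (s i) / lam i := by
    intro i _
    exact div_nonneg (Complex.normSq_nonneg _) (hlam i)
  have hSpos : 0 < S := by
    rcases Finset.exists_ne_zero_of_sum_ne_zero (by rw [htF]; norm_num : ∑ i ∈ F, Complex.normSq (s i) ≠ 0) with ⟨i, hiF, hi⟩
    have hne : lam i ≠ 0 := (Finset.mem_filter.mp hiF).2
    have hlami : 0 < lam i := lt_of_le_of_ne (hlam i) (Ne.symm hne)
    refine Finset.sum_pos' hSnonneg ⟨i, hiF, ?_⟩
    exact div_pos (lt_of_le_of_ne (Complex.normSq_nonneg _) (Ne.symm hi)) hlami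
  have haS : a * S ≤ 1 := by
    have := hquad
    rw [sq] at this
    nlinarith
  -- Hölder
  set p : ℝ := 1 + β with hp
  have hp1 : 1 ≤ p := by simp [hp]; linarith
  have hw : ∀ i, 0 ≤ Complex.normSq (s i) / lam i := fun i =>
    div_nonneg (Complex.normSq_nonneg _) (hlam i)
  have hH := Real.inner_le_weight_mul_Lp_of_nonneg F hp1
    (fun i => Complex.normSq (s i) / lam i) lam hw hlam
  have hwf : ∑ i ∈ F, Complex.normSq (s i) / lam i * lam i = 1 := by
    rw [← htF]
    refine Finset.sum_congr rfl fun i hiF => ?_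
    have : lam i ≠ 0 := (Finset.mem_filter.mp hiF).2
    field_simp
  set X : ℝ := ∑ i ∈ F, Complex.normSq (s i) * lam i ^ β with hXdef
  have hwfp : ∑ i ∈ F, Complex.normSq (s i) / lam i * lam i ^ p = X := by
    refine Finset.sum_congr rfl fun i hiF => ?_
    have hne : lam i ≠ 0 := (Finset.mem_filter.mp hiF).2
    have hpos : 0 < lam i := lt_of_le_of_ne (hlam i) (Ne.symm hne)
    rw [hp, Real.rpow_add hpos, Real.rpow_one]
    field_simp
  rw [hwf, hwfp] at hH
  -- hH : 1 ≤ S ^ (1 - p⁻¹) * X ^ p⁻¹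
  have hXnn : 0 ≤ X := Finset.sum_nonneg fun i _ => mul_nonneg (Complex.normSq_nonneg _)
      (Real.rpow_nonneg (hlam i) β)
  have hp0 : (0:ℝ) < p := by linarith
  have key : 1 ≤ S ^ β * X := by
    calc (1:ℝ) = 1 ^ p := (Real.one_rpow p).symm
      _ ≤ (S ^ (1 - p⁻¹) * X ^ p⁻¹) ^ p := by
          apply Real.rpow_le_rpow (by norm_num) hH (le_of_lt hp0)
      _ = S ^ ((1 - p⁻¹) * p) * X ^ (p⁻¹ * p) := by
          rw [Real.mul_rpow (Real.rpow_nonneg hSpos.le _) (Real.rpow_nonneg hXnn _),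
            ← Real.rpow_mul hSpos.le, ← Real.rpow_mul hXnn]
      _ = S ^ β * X := by
          rw [inv_mul_cancel₀ hp0.ne', Real.rpow_one]
          congr 1
          have : (1 - p⁻¹) * p = p - 1 := by field_simp
          rw [this, hp]; ring_nf
  -- conclude
  have hab : a ^ β * S ^ β ≤ 1 := by
    rw [← Real.mul_rpow ha hSpos.le]
    calc (a * S) ^ β ≤ 1 ^ β := Real.rpow_le_rpow (mul_nonneg ha hSpos.le) haS hβ0.le
      _ = 1 := Real.one_rpow β
  have hSβ : 0 < S ^ β := Real.rpow_pos_of_pos hSpos β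
  have haX : a ^ β ≤ X := by
    have h2 : a ^ β * S ^ β ≤ X * S ^ β := by
      calc a ^ β * S ^ β ≤ 1 := hab
        _ ≤ S ^ β * X := key
        _ = X * S ^ β := by ring
    exact le_of_mul_le_mul_right h2 hSβ
  calc a ^ β ≤ X := haX
    _ ≤ ∑ i, Complex.normSq (s i) * lam i ^ β := by
        apply Finset.sum_le_sum_of_subset_of_nonneg (Finset.subset_univ F)
        intro i _ _
        exact mul_nonneg (Complex.normSq_nonneg _) (Real.rpow_nonneg (hlam i) β)

private lemma psd_constraints {lam : n → ℝ} {s : n → ℂ} {a : ℝ} (ha : 0 ≤ a)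
    (hlam : ∀ i, 0 ≤ lam i)
    (hPSD : (Matrix.diagonal (fun i => (lam i : ℂ)) - (a : ℂ) • outer s).PosSemidef) :
    (∀ i, lam i = 0 → a * Complex.normSq (s i) = 0) ∧
    a * (∑ i ∈ univ.filter (fun i => lam i ≠ 0), Complex.normSq (s i) / lam i) ^ 2
      ≤ ∑ i ∈ univ.filter (fun i => lam i ≠ 0), Complex.normSq (s i) / lam i := by
  set M := Matrix.diagonal (fun i => (lam i : ℂ)) - (a : ℂ) • outer s with hM
  constructor
  · intro i hi
    have h := hPSD.re_dotProduct_nonneg (Pi.single i 1)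
    have hstar : star (Pi.single i 1 : n → ℂ) = Pi.single i 1 := by
      funext k
      by_cases hk : k = i
      · subst hk; simp
      · simp [Pi.single_eq_of_ne hk]
    rw [hstar, Matrix.mulVec_single_one, dotProduct] at h
    simp only [Matrix.col_apply] at h
    rw [Finset.sum_eq_single i (by intro b _ hb; simp [Pi.single_eq_of_ne hb])
      (by intro hh; exact absurd (Finset.mem_univ i) hh)] at h
    simp only [Pi.single_eq_same, one_mul, hM, Matrix.sub_apply, Matrix.diagonal_apply_eq,
      Matrix.smul_apply, outer, Matrix.of_apply, smul_eq_mul, hi] at h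
    have hz : ((a:ℂ) * (s i * star (s i))) = ((a * Complex.normSq (s i) : ℝ) : ℂ) := by
      rw [Complex.star_def, Complex.mul_conj]
      push_cast; ring
    rw [hz] at h
    have h' : 0 ≤ -(a * Complex.normSq (s i)) := by simpa using h
    have h'' : 0 ≤ a * Complex.normSq (s i) := mul_nonneg ha (Complex.normSq_nonneg _)
    linarith
  · -- quadratic constraint
    set x : n → ℂ := fun i => if lam i = 0 then 0 else s i / (lam i : ℂ) with hx
    set S : ℝ := ∑ i ∈ univ.filter (fun i => lam i ≠ 0), Complex.normSq (s i) / lam i with hS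
    have h := hPSD.re_dotProduct_nonneg x
    set g : n → ℂ := fun k => if lam k = 0 then 0 else ((Complex.normSq (s k) / lam k : ℝ) : ℂ)
      with hg
    have hgS : ∑ k, g k = (S : ℂ) := by
      rw [hS, Complex.ofReal_sum, Finset.sum_filter]
      refine Finset.sum_congr rfl fun k _ => ?_
      by_cases hk : lam k = 0 <;> simp [hg, hk]
    have hb1 : ∀ k, star (s k) * x k = g k := by
      intro k
      by_cases hk : lam k = 0
      · simp [hx, hg, hk]
      · simp only [hx, hg, if_neg hk]
        rw [mul_div_assoc', Complex.star_def, mul_comm, Complex.mul_conj, Complex.ofReal_div]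
    have hb2 : ∀ k, star (x k) * s k = g k := by
      intro k
      by_cases hk : lam k = 0
      · simp [hx, hg, hk]
      · simp only [hx, hg, if_neg hk]
        rw [star_div₀, Complex.star_def, Complex.conj_ofReal, div_mul_eq_mul_div, mul_comm,
          Complex.mul_conj, Complex.ofReal_div]
    have hb3 : ∀ k, star (x k) * ((lam k : ℂ) * x k) = g k := by
      intro k
      by_cases hk : lam k = 0
      · simp [hx, hg, hk]
      · have hlamne : ((lam k : ℂ)) ≠ 0 := by exact_mod_cast hk
        have hxk : (lam k : ℂ) * x k = s k := by
          simp only [hx, if_neg hk]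
          field_simp
        rw [hxk]
        exact hb2 k
    have hsx : ∑ k, star (s k) * x k = (S : ℂ) := by
      rw [← hgS]; exact Finset.sum_congr rfl fun k _ => hb1 k
    have hxs : ∑ k, star (x k) * s k = (S : ℂ) := by
      rw [← hgS]; exact Finset.sum_congr rfl fun k _ => hb2 k
    have hdiag : ∑ i, star (x i) * ((lam i : ℂ) * x i) = (S : ℂ) := by
      rw [← hgS]; exact Finset.sum_congr rfl fun k _ => hb3 k
    have hE : dotProduct (star x) (M *ᵥ x) = ((S - a * S ^ 2 : ℝ) : ℂ) := by
      rw [hM, Matrix.sub_mulVec, dotProduct_sub]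
      have h1 : dotProduct (star x) ((Matrix.diagonal (fun i => (lam i : ℂ))) *ᵥ x)
          = (S : ℂ) := by
        rw [dotProduct]
        calc ∑ i, star x i * ((Matrix.diagonal (fun i => (lam i : ℂ))) *ᵥ x) i
            = ∑ i, star (x i) * ((lam i : ℂ) * x i) := by
              refine Finset.sum_congr rfl fun i _ => ?_
              rw [Matrix.mulVec_diagonal]
              rfl
          _ = (S : ℂ) := hdiag
      have h2 : dotProduct (star x) (((a : ℂ) • outer s) *ᵥ x)
          = (a : ℂ) * ((S:ℂ) * (S:ℂ)) := by
        rw [Matrix.smul_mulVec, dotProduct_smul]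
        congr 1
        have houter : (outer s) *ᵥ x = fun i => s i * ∑ k, star (s k) * x k := by
          funext i
          rw [Matrix.mulVec, dotProduct, Finset.mul_sum]
          refine Finset.sum_congr rfl fun k _ => ?_
          simp [outer]; ring
        rw [houter, dotProduct]
        have : ∑ i, star x i * (s i * ∑ k, star (s k) * x k)
            = (∑ i, star (x i) * s i) * (∑ k, star (s k) * x k) := by
          rw [Finset.sum_mul]
          refine Finset.sum_congr rfl fun i _ => ?_
          simp only [Pi.star_apply]
          ring
        rw [this, hxs, hsx]
      rw [h1, h2]
      push_cast
      ring
    rw [hE] at h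
    have : 0 ≤ S - a * S ^ 2 := by
      simpa [RCLike.re_to_complex, ← Complex.ofReal_pow] using h
    linarith

end RenyiHelpers

theorem renyi_cq_bounds {n : Type*} [Fintype n] [DecidableEq n] {m : ℕ}
    (ρ : Fin m → Matrix n n ℂ) (hρ : ∀ x, IsDensity (ρ x))
    (p : Fin m → ℝ) (hp : ∀ x, 0 ≤ p x) (hp1 : ∑ x, p x = 1)
    (α : ℝ) (hα1 : 1 < α) (hα2 : α ≤ 2) :
    (1 / (1 - α)) * Real.logb 2 (∑ x, p x ^ α * (mpow (ρ x) α).trace.re)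
        - renyiEntropy α (∑ x, (p x : ℂ) • ρ x) ≤ Real.logb 2 m
    ∧ 0 ≤ (1 / (1 - α)) * Real.logb 2 (∑ x, p x ^ α * (mpow (ρ x) α).trace.re)
        - renyiEntropy α (∑ x, (p x : ℂ) • ρ x) := by
  classical
  have hm0 : 0 < m := by
    rcases Nat.eq_zero_or_pos m with h | h
    · exfalso; subst h; simp at hp1
    · exact h
  have hβ0 : (0:ℝ) < α - 1 := by linarith
  have hαpos : (0:ℝ) < α := by linarith
  have hne1 : α ≠ 1 := by linarith
  have hα0 : α ≠ 0 := by linarith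
  set σ : Matrix n n ℂ := ∑ x, (p x : ℂ) • ρ x with hσdef
  have hρH : ∀ x, (ρ x).IsHermitian := fun x => (hρ x).1.isHermitian
  set W : Fin m → Matrix n n ℂ := fun x => ((hρH x).eigenvectorUnitary : Matrix n n ℂ) with hWdef
  set r : Fin m → n → ℝ := fun x => (hρH x).eigenvalues with hrdef
  have hrnn : ∀ x j, 0 ≤ r x j := fun x j => (hρ x).1.eigenvalues_nonneg j
  -- decomposition of each ρ x into outer products
  have hρdecomp : ∀ x, ρ x = ∑ j, ((r x j : ℝ) : ℂ) • outer (fun i => W x i j) := by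
    intro x
    have hsp := (hρH x).spectral_theorem
    rw [Unitary.conjStarAlgAut_apply] at hsp
    ext i k
    rw [show ρ x = _ from hsp]
    rw [conj_diag_entry]
    simp only [Matrix.sum_apply, Matrix.smul_apply, outer, Matrix.of_apply, smul_eq_mul,
      Function.comp_apply]
    rfl
  -- σ as a sum of outer products
  set G : Fin m × n → Matrix n n ℂ :=
    fun z => ((p z.1 * r z.1 z.2 : ℝ) : ℂ) • outer (fun i => W z.1 i z.2) with hGdef
  have hσsum : σ = ∑ z : Fin m × n, G z := by
    rw [hσdef, Fintype.sum_prod_type]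
    refine Finset.sum_congr rfl fun x _ => ?_
    rw [hρdecomp x, Finset.smul_sum]
    refine Finset.sum_congr rfl fun j _ => ?_
    rw [smul_smul, hGdef]
    push_cast
    rfl
  have hGpsd : ∀ z : Fin m × n, (G z).PosSemidef := by
    intro z
    rw [hGdef]
    simp only
    rw [smul_outer_eq _ (mul_nonneg (hp z.1) (hrnn z.1 z.2))]
    exact posSemidef_outer _
  have hσPSD : σ.PosSemidef := by
    rw [hσsum]; exact posSemidef_sum _ _ fun z _ => hGpsd z
  have hσH : σ.IsHermitian := hσPSD.isHermitian
  set U : Matrix n n ℂ := (hσH.eigenvectorUnitary : Matrix n n ℂ) with hUdef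
  set lam : n → ℝ := hσH.eigenvalues with hlamdef
  have hlamnn : ∀ i, 0 ≤ lam i := fun i => hσPSD.eigenvalues_nonneg i
  set V : Fin m → Matrix n n ℂ := fun x => star U * W x with hVdef
  -- unitarity facts
  have hUU' : U * star U = 1 := (Matrix.mem_unitaryGroup_iff).mp (hσH.eigenvectorUnitary).2
  have hU'U : star U * U = 1 := (Matrix.mem_unitaryGroup_iff').mp (hσH.eigenvectorUnitary).2
  have hWW' : ∀ x, W x * star (W x) = 1 :=
    fun x => (Matrix.mem_unitaryGroup_iff).mp ((hρH x).eigenvectorUnitary).2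
  have hW'W : ∀ x, star (W x) * W x = 1 :=
    fun x => (Matrix.mem_unitaryGroup_iff').mp ((hρH x).eigenvectorUnitary).2
  have hstarV : ∀ x, star (V x) = star (W x) * U := by
    intro x; rw [hVdef]; simp only [StarMul.star_mul, star_star]
  have hV'V : ∀ x, star (V x) * V x = 1 := by
    intro x
    rw [hstarV, hVdef]
    simp only
    calc star (W x) * U * (star U * W x) = star (W x) * (U * star U) * W x := by
          rw [Matrix.mul_assoc, Matrix.mul_assoc, Matrix.mul_assoc]
      _ = star (W x) * W x := by rw [hUU', Matrix.mul_one]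
      _ = 1 := hW'W x
  have hVV' : ∀ x, V x * star (V x) = 1 := by
    intro x
    rw [hstarV, hVdef]
    simp only
    calc star U * W x * (star (W x) * U) = star U * (W x * star (W x)) * U := by
          rw [Matrix.mul_assoc, Matrix.mul_assoc, Matrix.mul_assoc]
      _ = star U * U := by rw [hWW' x, Matrix.mul_one]
      _ = 1 := hU'U
  -- row and column sums of |V x i j|^2
  have hrow : ∀ x i, ∑ j, Complex.normSq (V x i j) = 1 := by
    intro x i
    have h := congrArg (fun M => (M i i).re) (hVV' x)
    simp only [Matrix.mul_apply, Matrix.one_apply_eq, Complex.one_re] at h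
    rw [← h, Complex.re_sum]
    refine Finset.sum_congr rfl fun j _ => ?_
    rw [Matrix.star_apply, Complex.star_def, Complex.mul_conj]
    simp
  have hcol : ∀ x j, ∑ i, Complex.normSq (V x i j) = 1 := by
    intro x j
    have h := congrArg (fun M => (M j j).re) (hV'V x)
    simp only [Matrix.mul_apply, Matrix.one_apply_eq, Complex.one_re] at h
    rw [← h, Complex.re_sum]
    refine Finset.sum_congr rfl fun i _ => ?_
    rw [Matrix.star_apply, Complex.star_def, mul_comm, Complex.mul_conj]
    simp
  -- the eigenvalues of σ in terms of the V's
  have hUσU : ∀ x, star U * ρ x * U = V x * Matrix.diagonal (fun j => (r x j : ℂ)) * star (V x) := by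
    intro x
    have hsp := (hρH x).spectral_theorem
    rw [Unitary.conjStarAlgAut_apply] at hsp
    calc star U * ρ x * U
        = star U * (W x * Matrix.diagonal (RCLike.ofReal ∘ (hρH x).eigenvalues) * star (W x)) * U := by
          rw [← hsp]
      _ = (star U * W x) * Matrix.diagonal (fun j => (r x j : ℂ)) * (star (W x) * U) := by
          simp only [Matrix.mul_assoc]
          rfl
      _ = V x * Matrix.diagonal (fun j => (r x j : ℂ)) * star (V x) := by
          rw [hstarV, hVdef]
  have hC1 : ∀ i, lam i = ∑ x, p x * ∑ j, Complex.normSq (V x i j) * r x j := by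
    intro i
    have hdg := hσH.conjStarAlgAut_star_eigenvectorUnitary
    rw [Unitary.conjStarAlgAut_star_apply] at hdg
    have h2 : star U * σ * U = ∑ x, (p x : ℂ) • (star U * ρ x * U) := by
      rw [hσdef, Finset.mul_sum, Finset.sum_mul]
      refine Finset.sum_congr rfl fun x _ => ?_
      rw [Matrix.mul_smul, Matrix.smul_mul]
    have h3 := congrArg (fun M => (M i i).re) (hdg.symm.trans h2)
    simp only [Matrix.diagonal_apply_eq, Function.comp_apply, Matrix.sum_apply,
      Matrix.smul_apply, smul_eq_mul] at h3
    rw [Complex.re_sum] at h3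
    have h4 : ∀ x, ((p x : ℂ) * ((star U * ρ x * U) i i)).re
        = p x * ∑ j, Complex.normSq (V x i j) * r x j := by
      intro x
      rw [hUσU x, conj_diag_entry, Complex.re_ofReal_mul, Complex.re_sum]
      congr 1
      refine Finset.sum_congr rfl fun j _ => ?_
      rw [Complex.star_def, Complex.mul_conj, ← Complex.ofReal_mul, Complex.ofReal_re]
      ring
    have h5 : ((RCLike.ofReal (lam i) : ℂ)).re = lam i := by simp
    rw [h5] at h3
    rw [h3]
    exact Finset.sum_congr rfl fun x _ => h4 x
  -- trace formulas
  have hQtr : (mpow σ α).trace.re = ∑ i, lam i ^ α := trace_mpow_re hσH α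
  have hTxtr : ∀ x, (mpow (ρ x) α).trace.re = ∑ j, r x j ^ α := fun x => trace_mpow_re (hρH x) α
  set T : ℝ := ∑ x, p x ^ α * ∑ j, r x j ^ α with hTdef
  set Q : ℝ := ∑ i, lam i ^ α with hQdef
  -- the key rank-one bounds
  have hkey : ∀ x j, (p x * r x j) ^ (α - 1) ≤ ∑ i, Complex.normSq (V x i j) * lam i ^ (α - 1) := by
    intro x j
    -- PSD of diagonal lam - a • outer s
    set a : ℝ := p x * r x j with hadef
    have ha : 0 ≤ a := mul_nonneg (hp x) (hrnn x j)
    set s : n → ℂ := fun i => V x i j with hsdef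
    have hMpsd : (Matrix.diagonal (fun i => (lam i : ℂ)) - (a : ℂ) • outer s).PosSemidef := by
      set u : n → ℂ := fun i => W x i j with hudef
      have hPsum : σ - G (x, j) = ∑ z ∈ Finset.univ.erase (x, j), G z := by
        rw [hσsum]
        rw [← Finset.sum_erase_add Finset.univ G (Finset.mem_univ (x, j))]
        abel
      have hPpsd : (σ - G (x, j)).PosSemidef := by
        rw [hPsum]
        exact posSemidef_sum _ _ fun z _ => hGpsd z
      have hconj := hPpsd.conjTranspose_mul_mul_same U
      have heq : Uᴴ * (σ - G (x, j)) * U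
          = Matrix.diagonal (fun i => (lam i : ℂ)) - (a : ℂ) • outer s := by
        rw [Matrix.mul_sub, Matrix.sub_mul]
        congr 1
        · rw [← Matrix.star_eq_conjTranspose]
          have := hσH.conjStarAlgAut_star_eigenvectorUnitary
          rw [Unitary.conjStarAlgAut_star_apply] at this
          rw [this]
          rfl
        · rw [hGdef]
          simp only
          rw [← Matrix.star_eq_conjTranspose]
          rw [Matrix.mul_smul, Matrix.smul_mul, outer_conj]
          congr 1
      rw [heq] at hconj
      exact hconj
    obtain ⟨hker, hquad⟩ := psd_constraints ha hlamnn hMpsd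
    exact rankOneBound hlamnn ha hβ0 (by linarith) (hcol x j) hker hquad
  -- LOWER BOUND : T ≤ Q
  have hfold : ∀ t : ℝ, 0 ≤ t → t ^ α = t * t ^ (α - 1) := by
    intro t ht
    rcases eq_or_lt_of_le ht with h | h
    · rw [← h, Real.zero_rpow hα0, Real.zero_rpow (by linarith : α - 1 ≠ 0), mul_zero]
    · rw [show α = 1 + (α - 1) by ring, Real.rpow_add h, Real.rpow_one]
      norm_num
  have hQT : T ≤ Q := by
    have hQ2 : Q = ∑ x, p x * ∑ j, r x j * ∑ i, Complex.normSq (V x i j) * lam i ^ (α - 1) := by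
      rw [hQdef]
      calc ∑ i, lam i ^ α = ∑ i, (∑ x, p x * ∑ j, Complex.normSq (V x i j) * r x j) * lam i ^ (α-1) := by
            refine Finset.sum_congr rfl fun i _ => ?_
            rw [hfold (lam i) (hlamnn i), ← hC1 i]
        _ = ∑ i, ∑ x, ∑ j, p x * (r x j * (Complex.normSq (V x i j) * lam i ^ (α-1))) := by
            refine Finset.sum_congr rfl fun i _ => ?_
            simp only [Finset.sum_mul, Finset.mul_sum]
            refine Finset.sum_congr rfl fun x _ => Finset.sum_congr rfl fun j _ => ?_
            ring
        _ = ∑ x, ∑ j, ∑ i, p x * (r x j * (Complex.normSq (V x i j) * lam i ^ (α-1))) := by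
            rw [Finset.sum_comm]
            refine Finset.sum_congr rfl fun x _ => Finset.sum_comm
        _ = ∑ x, p x * ∑ j, r x j * ∑ i, Complex.normSq (V x i j) * lam i ^ (α - 1) := by
            refine Finset.sum_congr rfl fun x _ => ?_
            simp only [Finset.mul_sum]
    rw [hQ2, hTdef]
    refine Finset.sum_le_sum fun x _ => ?_
    rw [Finset.mul_sum, Finset.mul_sum]
    refine Finset.sum_le_sum fun j _ => ?_
    calc p x ^ α * r x j ^ α = (p x * r x j) ^ α := (Real.mul_rpow (hp x) (hrnn x j)).symm
      _ = (p x * r x j) * (p x * r x j) ^ (α - 1) :=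
          hfold _ (mul_nonneg (hp x) (hrnn x j))
      _ ≤ (p x * r x j) * ∑ i, Complex.normSq (V x i j) * lam i ^ (α - 1) :=
          mul_le_mul_of_nonneg_left (hkey x j) (mul_nonneg (hp x) (hrnn x j))
      _ = p x * (r x j * ∑ i, Complex.normSq (V x i j) * lam i ^ (α - 1)) := by ring
  -- UPPER BOUND : Q ≤ m ^ (α - 1) * T
  have hQU : Q ≤ (m : ℝ) ^ (α - 1) * T := by
    have hstep : ∀ i, lam i ^ α ≤ (m:ℝ) ^ (α-1) * ∑ x, p x ^ α * ∑ j, Complex.normSq (V x i j) * r x j ^ α := by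
      intro i
      have hd : ∀ x, 0 ≤ p x * ∑ j, Complex.normSq (V x i j) * r x j := by
        intro x
        exact mul_nonneg (hp x) (Finset.sum_nonneg fun j _ =>
          mul_nonneg (Complex.normSq_nonneg _) (hrnn x j))
      have hpm := Real.rpow_sum_le_const_mul_sum_rpow Finset.univ
        (fun x => p x * ∑ j, Complex.normSq (V x i j) * r x j) hα1.le
      rw [show ∑ x, |p x * ∑ j, Complex.normSq (V x i j) * r x j|
          = ∑ x, p x * ∑ j, Complex.normSq (V x i j) * r x j from
          Finset.sum_congr rfl fun x _ => abs_of_nonneg (hd x)] at hpm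
      rw [← hC1 i] at hpm
      have hcard : ((Finset.univ : Finset (Fin m)).card : ℝ) = (m:ℝ) := by simp
      rw [hcard] at hpm
      calc lam i ^ α ≤ (m:ℝ) ^ (α-1) * ∑ x, |p x * ∑ j, Complex.normSq (V x i j) * r x j| ^ α := hpm
        _ ≤ (m:ℝ) ^ (α-1) * ∑ x, p x ^ α * ∑ j, Complex.normSq (V x i j) * r x j ^ α := by
            apply mul_le_mul_of_nonneg_left _ (Real.rpow_nonneg (Nat.cast_nonneg m) _)
            refine Finset.sum_le_sum fun x _ => ?_
            rw [abs_of_nonneg (hd x), Real.mul_rpow (hp x) (Finset.sum_nonneg fun j _ =>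
              mul_nonneg (Complex.normSq_nonneg _) (hrnn x j))]
            apply mul_le_mul_of_nonneg_left _ (Real.rpow_nonneg (hp x) α)
            exact jensen_rpow hα1.le (fun j => Complex.normSq (V x i j)) (r x)
              (fun j => Complex.normSq_nonneg _) (hrnn x) (hrow x i)
    calc Q ≤ ∑ i, (m:ℝ) ^ (α-1) * ∑ x, p x ^ α * ∑ j, Complex.normSq (V x i j) * r x j ^ α :=
          Finset.sum_le_sum fun i _ => hstep i
      _ = (m:ℝ) ^ (α-1) * ∑ x, p x ^ α * ∑ j, (∑ i, Complex.normSq (V x i j)) * r x j ^ α := by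
          rw [← Finset.mul_sum]
          congr 1
          rw [Finset.sum_comm]
          refine Finset.sum_congr rfl fun x _ => ?_
          rw [← Finset.mul_sum]
          congr 1
          rw [Finset.sum_comm]
          refine Finset.sum_congr rfl fun j _ => ?_
          rw [Finset.sum_mul]
      _ = (m:ℝ) ^ (α-1) * T := by
          rw [hTdef]
          congr 1
          refine Finset.sum_congr rfl fun x _ => ?_
          congr 1
          refine Finset.sum_congr rfl fun j _ => ?_
          rw [hcol x j, one_mul]
  -- positivity of T
  have hTnn_terms : ∀ x, 0 ≤ p x ^ α * ∑ j, r x j ^ α := fun x =>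
    mul_nonneg (Real.rpow_nonneg (hp x) α)
      (Finset.sum_nonneg fun j _ => Real.rpow_nonneg (hrnn x j) α)
  have hT0 : 0 < T := by
    obtain ⟨x, hx⟩ : ∃ x, 0 < p x := by
      by_contra hno
      push_neg at hno
      have : ∑ x, p x = 0 := Finset.sum_eq_zero fun x _ => le_antisymm (hno x) (hp x)
      rw [hp1] at this; norm_num at this
    have hrsum : ∑ j, r x j = 1 := by
      have := trace_eq_sum_eigenvalues (hρH x)
      rw [(hρ x).2] at this
      have := congrArg Complex.re this.symm
      rw [Complex.re_sum] at this
      simpa using this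
    obtain ⟨j, hj⟩ : ∃ j, 0 < r x j := by
      by_contra hno
      push_neg at hno
      have : ∑ j, r x j = 0 := Finset.sum_eq_zero fun j _ => le_antisymm (hno j) (hrnn x j)
      rw [hrsum] at this; norm_num at this
    have hterm : 0 < p x ^ α * ∑ j, r x j ^ α := by
      apply mul_pos (Real.rpow_pos_of_pos hx α)
      refine Finset.sum_pos' (fun j _ => Real.rpow_nonneg (hrnn x j) α) ⟨j, Finset.mem_univ j, Real.rpow_pos_of_pos hj α⟩
    calc (0:ℝ) < p x ^ α * ∑ j, r x j ^ α := hterm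
      _ ≤ T := Finset.single_le_sum (fun x _ => hTnn_terms x) (Finset.mem_univ x)
  have hQ0 : 0 < Q := lt_of_lt_of_le hT0 hQT
  -- final arithmetic
  have hrw1 : ∑ x, p x ^ α * (mpow (ρ x) α).trace.re = T := by
    rw [hTdef]
    exact Finset.sum_congr rfl fun x _ => by rw [hTxtr x]
  have hrw2 : renyiEntropy α σ = (1 / (1 - α)) * Real.logb 2 Q := by
    rw [renyiEntropy, if_neg hne1, hQtr, hQdef]
  rw [hrw1, hrw2]
  set u : ℝ := 1 / (α - 1) with hu
  have hu0 : 0 < u := by positivity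
  have hfrac : (1 / (1 - α)) = -u := by
    rw [hu]
    have h1α : (1:ℝ) - α ≠ 0 := by linarith
    have h2α : α - (1:ℝ) ≠ 0 := by linarith
    field_simp
    ring
  set X := Real.logb 2 T with hX
  set Y := Real.logb 2 Q with hY
  have hXY : X ≤ Y := Real.logb_le_logb_of_le (by norm_num) hT0 hQT
  have hYX : Y - X ≤ (α - 1) * Real.logb 2 m := by
    have h2 : Y ≤ Real.logb 2 ((m:ℝ) ^ (α-1) * T) := by
      rw [hY]
      exact Real.logb_le_logb_of_le (by norm_num) hQ0 hQU
    have h3 : Real.logb 2 ((m:ℝ) ^ (α-1) * T) = (α - 1) * Real.logb 2 m + X := by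
      rw [Real.logb_mul (by positivity) hT0.ne', hX]
      congr 1
      rw [Real.logb, Real.logb, Real.log_rpow (by exact_mod_cast hm0)]
      ring
    linarith
  constructor
  · have : -u * X - -u * Y = u * (Y - X) := by ring
    rw [hfrac, this]
    calc u * (Y - X) ≤ u * ((α - 1) * Real.logb 2 m) :=
          mul_le_mul_of_nonneg_left hYX hu0.le
      _ = Real.logb 2 m := by
          rw [hu]
          field_simp
  · rw [hfrac]
    have : -u * X - -u * Y = u * (Y - X) := by ring
    rw [this]
    exact mul_nonneg hu0.le (by linarith)
end

section
/- If σ^{AB} is a separable bipartite density matrix with marginal σ^A = Tr_B σ^{AB}, then σ^{AB} ≤ σ^A ⊗ I^B in the Loewner order. -/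
open Matrix BigOperators Kronecker ComplexOrder

lemma kron_conjTranspose {a b c d : Type*} (A : Matrix a b ℂ) (B : Matrix c d ℂ) :
    (A ⊗ₖ B)ᴴ = Aᴴ ⊗ₖ Bᴴ := by
  ext ⟨i,j⟩ ⟨k,l⟩
  simp [kroneckerMap, conjTranspose_apply, mul_comm]

lemma posSemidef_kron {a b : Type*} [Fintype a] [Fintype b] [DecidableEq a] [DecidableEq b]
    {A : Matrix a a ℂ} {B : Matrix b b ℂ} (hA : A.PosSemidef) (hB : B.PosSemidef) :
    (A ⊗ₖ B).PosSemidef := by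
  exact hA.kronecker hB

lemma posSemidef_smul_real {n : Type*} [Fintype n] {M : Matrix n n ℂ}
    (hM : M.PosSemidef) {q : ℝ} (hq : 0 ≤ q) : ((q : ℂ) • M).PosSemidef := by
  rw [Matrix.posSemidef_iff_dotProduct_mulVec]
  constructor
  · unfold Matrix.IsHermitian
    rw [Matrix.conjTranspose_smul, hM.1]
    simp
  · intro x
    rw [Matrix.smul_mulVec, dotProduct_smul]
    exact mul_nonneg (by exact_mod_cast hq) (hM.dotProduct_mulVec_nonneg x)

lemma one_sub_posSemidef {n : Type*} [Fintype n] [DecidableEq n]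
    {ω : Matrix n n ℂ} (h : IsDensity ω) : ((1 : Matrix n n ℂ) - ω).PosSemidef := by
  obtain ⟨hps, htr⟩ := h
  have hh := hps.1
  have hu1 : star (hh.eigenvectorUnitary : Matrix n n ℂ) * (hh.eigenvectorUnitary : Matrix n n ℂ) = 1 :=
    hh.eigenvectorUnitary.2.1
  have hu2 : (hh.eigenvectorUnitary : Matrix n n ℂ) * star (hh.eigenvectorUnitary : Matrix n n ℂ) = 1 :=
    hh.eigenvectorUnitary.2.2
  have hsum : ∑ i, hh.eigenvalues i = 1 := by
    have h2 : ω.trace = ∑ i, (hh.eigenvalues i : ℂ) := by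
      conv_lhs => rw [hh.spectral_theorem, Unitary.conjStarAlgAut_apply]
      rw [Matrix.trace_mul_cycle, hu1, Matrix.one_mul, Matrix.trace_diagonal]
      simp
    have h3 := htr ▸ h2
    exact_mod_cast h3.symm
  have hle : ∀ i, hh.eigenvalues i ≤ 1 := by
    intro i
    rw [← hsum]
    exact Finset.single_le_sum (fun j _ => hps.eigenvalues_nonneg j) (Finset.mem_univ i)
  have hD : Matrix.diagonal (fun i => ((1 - hh.eigenvalues i : ℝ) : ℂ)) =
      Matrix.diagonal (fun _ => (1:ℂ)) - Matrix.diagonal (RCLike.ofReal ∘ hh.eigenvalues) := by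
    rw [Matrix.diagonal_sub]
    ext i
    simp
  have key : (hh.eigenvectorUnitary : Matrix n n ℂ) *
      Matrix.diagonal (fun i => ((1 - hh.eigenvalues i : ℝ) : ℂ)) *
      star (hh.eigenvectorUnitary : Matrix n n ℂ) = (1 : Matrix n n ℂ) - ω := by
    rw [hD, Matrix.mul_sub, Matrix.sub_mul, Matrix.diagonal_one, Matrix.mul_one, hu2,
      ← Unitary.conjStarAlgAut_apply (S := ℂ), ← hh.spectral_theorem]
  rw [← key]
  refine Matrix.PosSemidef.mul_mul_conjTranspose_same ?_ _
  refine Matrix.posSemidef_diagonal_iff.mpr fun i => ?_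
  rw [← Complex.ofReal_zero, Complex.real_le_real]
  linarith [hle i]


theorem separable_le_marginal_tensor_one {a b : Type*} [Fintype a] [Fintype b]
    [DecidableEq a] [DecidableEq b]
    (σ : Matrix (a × b) (a × b) ℂ) (hσ : IsDensity σ) (hsep : IsSepState σ) :
    (ptraceB σ ⊗ₖ (1 : Matrix b b ℂ) - σ).PosSemidef := by

  obtain ⟨k, q, τ, ω, hq0, hq1, hτ, hω, rfl⟩ := hsep
  have hpt : ptraceB (∑ i, (q i : ℂ) • (τ i ⊗ₖ ω i)) = ∑ i, (q i : ℂ) • τ i := by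
    ext x y
    simp only [ptraceB, Matrix.of_apply, Matrix.sum_apply, Matrix.smul_apply,
      kroneckerMap_apply, smul_eq_mul]
    rw [Finset.sum_comm]
    refine Finset.sum_congr rfl fun i _ => ?_
    rw [← Finset.mul_sum, ← Finset.mul_sum,
      show (∑ l : b, ω i l l) = (ω i).trace from rfl, (hω i).2, mul_one]
  rw [hpt]
  have key : (∑ i, (q i : ℂ) • τ i) ⊗ₖ (1 : Matrix b b ℂ) - (∑ i, (q i : ℂ) • (τ i ⊗ₖ ω i))
      = ∑ i, (q i : ℂ) • (τ i ⊗ₖ ((1 : Matrix b b ℂ) - ω i)) := by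
    ext ⟨x1,x2⟩ ⟨y1,y2⟩
    simp [kroneckerMap, Matrix.sum_apply, Matrix.sub_apply, Finset.sum_mul, mul_sub,
      Finset.sum_sub_distrib, Matrix.one_apply, mul_assoc]
  rw [key]
  refine Finset.sum_induction _ _ (fun A B hA hB => hA.add hB) Matrix.PosSemidef.zero
    fun i _ => ?_
  exact posSemidef_smul_real (posSemidef_kron (hτ i).1 (one_sub_posSemidef (hω i))) (hq0 i)
end
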